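/- arXiv:math/0102014 — 9 statements merged into one kernel-verified Lean document; each statement's English description precedes it below -/
import Mathlib

section
/- Let g₁ and g₂ be finite-dimensional complex nilpotent Lie algebras with chosen bases containing generator sets of sizes n₁, n₂ ≥ 2. The bilinear map φ : (g₁ ⊕ g₂) × (g₁ ⊕ g₂) → ℂ^(n₁n₂) defined by φ(Xᵢ, X'ⱼ) = e_{(i-1)n₂+j} for generators Xᵢ of g₁ (1 ≤ i ≤ n₁) and X'ⱼ of g₂ (1 ≤ j ≤ n₂), extended antisymmetrically and vanishing on all other pairs of basis vectors, is a 2-cocycle of g₁ ⊕ g₂ with values in the trivial module ℂ^(n₁n₂). -/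
open Module

noncomputable section

/-- Direct sum (product) of two Lie rings. -/
instance prodLieRing (L L' : Type*) [LieRing L] [LieRing L'] : LieRing (L × L') where
  bracket p q := (⁅p.1, q.1⁆, ⁅p.2, q.2⁆)
  add_lie x y z := Prod.ext (add_lie x.1 y.1 z.1) (add_lie x.2 y.2 z.2)
  lie_add x y z := Prod.ext (lie_add x.1 y.1 z.1) (lie_add x.2 y.2 z.2)
  lie_self x := Prod.ext (lie_self x.1) (lie_self x.2)
  leibniz_lie x y z := Prod.ext (leibniz_lie x.1 y.1 z.1) (leibniz_lie x.2 y.2 z.2)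

instance prodLieAlgebra (R L L' : Type*) [CommRing R] [LieRing L] [LieRing L']
    [LieAlgebra R L] [LieAlgebra R L'] : LieAlgebra R (L × L') where
  lie_smul t x y := Prod.ext (lie_smul t x.1 y.1) (lie_smul t x.2 y.2)

/-- A Lie algebra is nonsplit if it is not the direct sum of two nonzero ideals. -/
def LieAlgebra.Nonsplit (R L : Type*) [CommRing R] [LieRing L] [LieAlgebra R L] : Prop :=
  ¬ ∃ I J : LieIdeal R L, I ≠ ⊥ ∧ J ≠ ⊥ ∧ I ⊓ J = ⊥ ∧ I ⊔ J = ⊤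

/-- `g` is nonabelian: some bracket is nonzero. -/
def LieAlgebra.Nonabelian (L : Type*) [LieRing L] : Prop := ∃ x y : L, ⁅x, y⁆ ≠ 0

/-- `L` is the product by generators `g1 ×̲ g2`: the central extension of `g1 ⊕ g2`
by `ℂ^(n1 n2)` given by the cocycle pairing the generators of `g1` with those of `g2`. -/
structure IsProductByGenerators
    (L g1 g2 : Type*) [LieRing L] [LieAlgebra ℂ L]
    [LieRing g1] [LieAlgebra ℂ g1] [LieRing g2] [LieAlgebra ℂ g2] where
  m1 : ℕ
  m2 : ℕ
  n1 : ℕ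
  n2 : ℕ
  two_le_n1 : 2 ≤ n1
  two_le_n2 : 2 ≤ n2
  n1_le : n1 ≤ m1
  n2_le : n2 ≤ m2
  /-- an adapted basis of `g1` -/
  b1 : Basis (Fin m1) ℂ g1
  /-- an adapted basis of `g2` -/
  b2 : Basis (Fin m2) ℂ g2
  /-- the first `n1` basis vectors generate `g1` -/
  gen1 : Submodule.span ℂ (⇑b1 '' {i : Fin m1 | (i : ℕ) < n1}) ⊔
      (LieAlgebra.derivedSeries ℂ g1 1).toSubmodule = ⊤
  gen2 : Submodule.span ℂ (⇑b2 '' {i : Fin m2 | (i : ℕ) < n2}) ⊔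
      (LieAlgebra.derivedSeries ℂ g2 1).toSubmodule = ⊤
  /-- the remaining basis vectors span the derived subalgebra -/
  adapted1 : (LieAlgebra.derivedSeries ℂ g1 1).toSubmodule ≤
      Submodule.span ℂ (⇑b1 '' {i : Fin m1 | n1 ≤ (i : ℕ)})
  adapted2 : (LieAlgebra.derivedSeries ℂ g2 1).toSubmodule ≤
      Submodule.span ℂ (⇑b2 '' {i : Fin m2 | n2 ≤ (i : ℕ)})
  /-- the cocycle, as a bilinear map `g1 × g2 → ℂ^(n1 n2)` -/
  Φ : g1 →ₗ[ℂ] g2 →ₗ[ℂ] (Fin n1 → Fin n2 → ℂ)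
  hΦ : ∀ i j, Φ (b1 i) (b2 j) =
      if h : (i : ℕ) < n1 ∧ (j : ℕ) < n2 then
        Pi.single (⟨i, h.1⟩ : Fin n1) (Pi.single (⟨j, h.2⟩ : Fin n2) (1 : ℂ)) else 0
  /-- the underlying linear identification of `L` with `g1 ⊕ g2 ⊕ ℂ^(n1 n2)` -/
  e : (g1 × g2 × (Fin n1 → Fin n2 → ℂ)) ≃ₗ[ℂ] L
  bracket_eq : ∀ a a' : g1 × g2 × (Fin n1 → Fin n2 → ℂ),
      ⁅e a, e a'⁆ = e (⁅a.1, a'.1⁆, ⁅a.2.1, a'.2.1⁆, Φ a.1 a'.2.1 - Φ a'.1 a.2.1)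

namespace IsProductByGenerators

variable {L g1 g2 : Type*} [LieRing L] [LieAlgebra ℂ L]
  [LieRing g1] [LieAlgebra ℂ g1] [LieRing g2] [LieAlgebra ℂ g2]
  (P : IsProductByGenerators L g1 g2)

/-- inclusion of `g1` -/
def ι₁ (x : g1) : L := P.e (x, 0, 0)
/-- inclusion of `g2` -/
def ι₂ (y : g2) : L := P.e (0, y, 0)
/-- inclusion of the adjoined center `g3 = ℂ^(n1 n2)` -/
def ι₃ (v : Fin P.n1 → Fin P.n2 → ℂ) : L := P.e (0, 0, v)
/-- projection onto `g1` -/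
def p₁ (z : L) : g1 := (P.e.symm z).1
/-- projection onto `g2` -/
def p₂ (z : L) : g2 := (P.e.symm z).2.1
/-- projection onto `g3` -/
def p₃ (z : L) : Fin P.n1 → Fin P.n2 → ℂ := (P.e.symm z).2.2

/-- the component `Dᵢⱼ = pᵢ ∘ D ∘ ιⱼ` of an endomorphism of the product. -/
def D11 (D : L →ₗ[ℂ] L) (x : g1) : g1 := P.p₁ (D (P.ι₁ x))
def D21 (D : L →ₗ[ℂ] L) (x : g1) : g2 := P.p₂ (D (P.ι₁ x))
def D31 (D : L →ₗ[ℂ] L) (x : g1) : Fin P.n1 → Fin P.n2 → ℂ := P.p₃ (D (P.ι₁ x))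
def D12 (D : L →ₗ[ℂ] L) (y : g2) : g1 := P.p₁ (D (P.ι₂ y))
def D22 (D : L →ₗ[ℂ] L) (y : g2) : g2 := P.p₂ (D (P.ι₂ y))
def D32 (D : L →ₗ[ℂ] L) (y : g2) : Fin P.n1 → Fin P.n2 → ℂ := P.p₃ (D (P.ι₂ y))
def D13 (D : L →ₗ[ℂ] L) (v : Fin P.n1 → Fin P.n2 → ℂ) : g1 := P.p₁ (D (P.ι₃ v))
def D23 (D : L →ₗ[ℂ] L) (v : Fin P.n1 → Fin P.n2 → ℂ) : g2 := P.p₂ (D (P.ι₃ v))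
def D33 (D : L →ₗ[ℂ] L) (v : Fin P.n1 → Fin P.n2 → ℂ) : Fin P.n1 → Fin P.n2 → ℂ :=
  P.p₃ (D (P.ι₃ v))

end IsProductByGenerators

/-- `IsDerivation D`: `D` satisfies the Leibniz rule. -/
def IsDerivation {L : Type*} [LieRing L] [LieAlgebra ℂ L] (D : L →ₗ[ℂ] L) : Prop :=
  ∀ x y : L, D ⁅x, y⁆ = ⁅D x, y⁆ + ⁅x, D y⁆

/-- the descending sequence `g^{[k]}`, with `g^{[1]} = Der(g)(g)`,
`g^{[k+1]} = Der(g)(g^{[k]})`. -/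
def derPow (g : Type*) [LieRing g] [LieAlgebra ℂ g] : ℕ → Submodule ℂ g
  | 0 => ⊤
  | k + 1 => Submodule.span ℂ
      {x | ∃ D : g →ₗ[ℂ] g, IsDerivation D ∧ ∃ y ∈ derPow g k, x = D y}

/-- characteristically nilpotent: `g^{[m]} = 0` for some `m`. -/
def CharacteristicallyNilpotent (g : Type*) [LieRing g] [LieAlgebra ℂ g] : Prop :=
  ∃ m, 1 ≤ m ∧ derPow g m = ⊥

/-- An S-algebra: for any Lie algebra `g2` and any derivation `D` of `g1 ×̲ g2`,
the component `D₂₁ = p₂ ∘ D ∘ p₁` maps `g1` into `[g2, g2]`. -/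
def IsSAlgebra (g1 : Type) [LieRing g1] [LieAlgebra ℂ g1] : Prop :=
  ∀ (g2 L : Type) (_ : LieRing g2) (_ : LieAlgebra ℂ g2) (_ : LieRing L)
    (_ : LieAlgebra ℂ L) (P : IsProductByGenerators L g1 g2) (D : L →ₗ[ℂ] L),
    IsDerivation D → ∀ x : g1, P.D21 D x ∈ LieAlgebra.derivedSeries ℂ g2 1

/-- nilpotency index: smallest `k` with `C^k g = 0` (`C¹g = [g,g]`). -/
noncomputable def nilindex (g : Type*) [LieRing g] [LieAlgebra ℂ g] : ℕ :=
  sInf {k | LieModule.lowerCentralSeries ℂ g g k = ⊥}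

/-- dimension as complex vector space -/
def fdim (g : Type*) [LieRing g] [LieAlgebra ℂ g] : ℕ := finrank ℂ g

/-- dimension of the center -/
def zdim (g : Type*) [LieRing g] [LieAlgebra ℂ g] : ℕ :=
  finrank ℂ (LieAlgebra.center ℂ g).toSubmodule

/-- dimension of the derived subalgebra `C¹g = [g,g]` -/
def ddim (g : Type*) [LieRing g] [LieAlgebra ℂ g] : ℕ :=
  finrank ℂ (LieAlgebra.derivedSeries ℂ g 1).toSubmodule

/-- minimal number of generators of a nilpotent Lie algebra: `dim g/[g,g]` -/
def gdim (g : Type*) [LieRing g] [LieAlgebra ℂ g] : ℕ :=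
  finrank ℂ (g ⧸ (LieAlgebra.derivedSeries ℂ g 1).toSubmodule)

def FinDim (g : Type*) [LieRing g] [LieAlgebra ℂ g] : Prop := FiniteDimensional ℂ g

/-- existence of a Lie algebra isomorphism -/
def LieIso (L L' : Type*) [LieRing L] [LieAlgebra ℂ L] [LieRing L'] [LieAlgebra ℂ L'] : Prop :=
  Nonempty (L ≃ₗ⁅ℂ⁆ L')

/-- the bilinear map pairing the generators of `g1` with those of `g2`
(and vanishing on all other pairs of basis vectors of adapted bases), extended
antisymmetrically, is a 2-cocycle of `g1 ⊕ g2` with values in the trivial module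
`ℂ^(n1 n2)`. -/
theorem statement_0 (g1 g2 : Type) [LieRing g1] [LieAlgebra ℂ g1] [LieRing g2] [LieAlgebra ℂ g2]
    [FiniteDimensional ℂ g1] [FiniteDimensional ℂ g2]
    [LieRing.IsNilpotent g1] [LieRing.IsNilpotent g2]
    (hna1 : LieAlgebra.Nonabelian g1) (hna2 : LieAlgebra.Nonabelian g2)
    (m1 m2 n1 n2 : ℕ) (hn1 : 2 ≤ n1) (hn2 : 2 ≤ n2) (h1 : n1 ≤ m1) (h2 : n2 ≤ m2)
    (b1 : Basis (Fin m1) ℂ g1) (b2 : Basis (Fin m2) ℂ g2)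
    -- the first `n1` (resp. `n2`) basis vectors generate `g1` (resp. `g2`)
    (gen1 : Submodule.span ℂ (⇑b1 '' {i : Fin m1 | (i : ℕ) < n1}) ⊔
      (LieAlgebra.derivedSeries ℂ g1 1).toSubmodule = ⊤)
    (gen2 : Submodule.span ℂ (⇑b2 '' {i : Fin m2 | (i : ℕ) < n2}) ⊔
      (LieAlgebra.derivedSeries ℂ g2 1).toSubmodule = ⊤)
    -- the bases are adapted: remaining basis vectors span the derived algebras
    (adapted1 : (LieAlgebra.derivedSeries ℂ g1 1).toSubmodule ≤
      Submodule.span ℂ (⇑b1 '' {i : Fin m1 | n1 ≤ (i : ℕ)}))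
    (adapted2 : (LieAlgebra.derivedSeries ℂ g2 1).toSubmodule ≤
      Submodule.span ℂ (⇑b2 '' {i : Fin m2 | n2 ≤ (i : ℕ)}))
    -- `φ` is the bilinear extension of `φ(Xᵢ, X'ⱼ) = e_{(i-1)n2 + j}` on generator pairs,
    -- zero on other pairs of basis vectors, extended antisymmetrically
    (φ : (g1 × g2) →ₗ[ℂ] (g1 × g2) →ₗ[ℂ] (Fin n1 → Fin n2 → ℂ))
    (hφ : φ = (b1.prod b2).constr ℂ fun p =>
      match p with
      | Sum.inl i => (b1.prod b2).constr ℂ fun q =>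
          match q with
          | Sum.inl _ => 0
          | Sum.inr j =>
              if h : (i : ℕ) < n1 ∧ (j : ℕ) < n2 then
                Pi.single (⟨i, h.1⟩ : Fin n1) (Pi.single (⟨j, h.2⟩ : Fin n2) (1 : ℂ)) else 0
      | Sum.inr j => (b1.prod b2).constr ℂ fun q =>
          match q with
          | Sum.inl i =>
              if h : (i : ℕ) < n1 ∧ (j : ℕ) < n2 then
                - Pi.single (⟨i, h.1⟩ : Fin n1) (Pi.single (⟨j, h.2⟩ : Fin n2) (1 : ℂ)) else 0
          | Sum.inr _ => 0) :
    -- `φ` is an alternating 2-cocycle for the trivial module `ℂ^(n1 n2)`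
    (∀ x : g1 × g2, φ x x = 0) ∧
    (∀ x y z : g1 × g2, φ ⁅x, y⁆ z + φ ⁅y, z⁆ x + φ ⁅z, x⁆ y = 0) := by
  have hb : b1.prod b2 = b1.prod b2 := rfl
  set b := b1.prod b2 with hb
  have hval : ∀ p q, φ (b p) (b q) =
      (match p, q with
      | Sum.inl i, Sum.inr j =>
          if h : (i : ℕ) < n1 ∧ (j : ℕ) < n2 then
            Pi.single (⟨i, h.1⟩ : Fin n1) (Pi.single (⟨j, h.2⟩ : Fin n2) (1 : ℂ)) else 0
      | Sum.inr j, Sum.inl i =>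
          if h : (i : ℕ) < n1 ∧ (j : ℕ) < n2 then
            - Pi.single (⟨i, h.1⟩ : Fin n1) (Pi.single (⟨j, h.2⟩ : Fin n2) (1 : ℂ)) else 0
      | _, _ => 0 : Fin n1 → Fin n2 → ℂ) := by
    intro p q
    rw [hφ]
    rcases p with i | j <;> rcases q with i' | j' <;>
      simp only [Basis.constr_basis]
  clear hφ
  -- skew-symmetry
  have hskew : ∀ x y : g1 × g2, φ x y = - φ y x := by
    have key : (LinearMap.mk₂ ℂ (fun x y : g1 × g2 => φ x y + φ y x)
        (fun a b c => by simp [add_add_add_comm])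
        (fun t a c => by simp [smul_add])
        (fun a b c => by simp [add_add_add_comm])
        (fun t a c => by simp [smul_add]) : (g1 × g2) →ₗ[ℂ] (g1 × g2) →ₗ[ℂ] _) = 0 := by
      apply b.ext; intro p
      apply b.ext; intro q
      have h1 := hval p q
      have h2 := hval q p
      simp only [LinearMap.mk₂_apply, LinearMap.zero_apply]
      rw [h1, h2]
      rcases p with i | j <;> rcases q with i' | j' <;> simp <;>
        · split <;> simp
    intro x y
    have h0 : φ x y + φ y x = 0 := by
      have := LinearMap.congr_fun (LinearMap.congr_fun key x) y
      simpa using this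
    exact eq_neg_of_add_eq_zero_left h0
  -- φ vanishes when the first argument comes from the derived subalgebras
  have hder : ∀ (d1 : g1) (d2 : g2),
      d1 ∈ Submodule.span ℂ (⇑b1 '' {i : Fin m1 | n1 ≤ (i : ℕ)}) →
      d2 ∈ Submodule.span ℂ (⇑b2 '' {j : Fin m2 | n2 ≤ (j : ℕ)}) →
      φ (d1, d2) = 0 := by
    have h1 : ∀ d1 ∈ Submodule.span ℂ (⇑b1 '' {i : Fin m1 | n1 ≤ (i : ℕ)}),
        φ (d1, 0) = 0 := by
      intro d1 hd1
      have : Submodule.span ℂ (⇑b1 '' {i : Fin m1 | n1 ≤ (i : ℕ)}) ≤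
          LinearMap.ker (φ.comp (LinearMap.inl ℂ g1 g2)) := by
        rw [Submodule.span_le]
        rintro _ ⟨i, hi, rfl⟩
        simp only [SetLike.mem_coe, LinearMap.mem_ker, LinearMap.comp_apply,
          LinearMap.inl_apply]
        apply b.ext; intro q
        have hbi : (b1 i, (0 : g2)) = b (Sum.inl i) := by
          ext <;> simp [hb]
        rw [hbi, hval (Sum.inl i) q]
        rcases q with i' | j'
        · simp
        · have hni : ¬((i:ℕ) < n1) := not_lt.mpr hi
          simp [hni]
      have := this hd1
      simpa using this
    have h2 : ∀ d2 ∈ Submodule.span ℂ (⇑b2 '' {j : Fin m2 | n2 ≤ (j : ℕ)}),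
        φ ((0 : g1), d2) = 0 := by
      intro d2 hd2
      have : Submodule.span ℂ (⇑b2 '' {j : Fin m2 | n2 ≤ (j : ℕ)}) ≤
          LinearMap.ker (φ.comp (LinearMap.inr ℂ g1 g2)) := by
        rw [Submodule.span_le]
        rintro _ ⟨j, hj, rfl⟩
        simp only [SetLike.mem_coe, LinearMap.mem_ker, LinearMap.comp_apply,
          LinearMap.inr_apply]
        apply b.ext; intro q
        have hbj : ((0 : g1), b2 j) = b (Sum.inr j) := by
          ext <;> simp [hb]
        rw [hbj, hval (Sum.inr j) q]
        rcases q with i' | j'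
        · have hnj : ¬((j:ℕ) < n2) := not_lt.mpr hj
          simp [hnj]
        · simp
      have := this hd2
      simpa using this
    intro d1 d2 hd1 hd2
    have : ((d1, d2) : g1 × g2) = (d1, 0) + (0, d2) := by simp
    rw [this, map_add, h1 d1 hd1, h2 d2 hd2, add_zero]
  -- brackets land in the derived subalgebras
  have hbr : ∀ x y : g1 × g2, φ ⁅x, y⁆ = 0 := by
    intro x y
    have hx1 : ⁅x.1, y.1⁆ ∈ LieAlgebra.derivedSeries ℂ g1 1 := by
      rw [LieAlgebra.derivedSeries_def, LieAlgebra.derivedSeriesOfIdeal_succ,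
        LieAlgebra.derivedSeriesOfIdeal_zero]
      exact LieSubmodule.lie_mem_lie (LieSubmodule.mem_top _) (LieSubmodule.mem_top _)
    have hx2 : ⁅x.2, y.2⁆ ∈ LieAlgebra.derivedSeries ℂ g2 1 := by
      rw [LieAlgebra.derivedSeries_def, LieAlgebra.derivedSeriesOfIdeal_succ,
        LieAlgebra.derivedSeriesOfIdeal_zero]
      exact LieSubmodule.lie_mem_lie (LieSubmodule.mem_top _) (LieSubmodule.mem_top _)
    have hxy : (⁅x, y⁆ : g1 × g2) = (⁅x.1, y.1⁆, ⁅x.2, y.2⁆) := rfl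
    rw [hxy]
    exact hder _ _ (adapted1 hx1) (adapted2 hx2)
  constructor
  · intro x
    have := hskew x x
    have h2 : (2 : ℂ) • φ x x = 0 := by
      rw [two_smul]
      nth_rewrite 1 [this]
      simp
    have := smul_eq_zero.mp h2
    rcases this with h | h
    · exact absurd h (by norm_num)
    · exact h
  · intro x y z
    rw [hbr x y, hbr y z, hbr z x]
    simp
end
end

section
/- For any two finite-dimensional complex nonabelian nilpotent Lie algebras g₁ and g₂ (split or not), the product by generators g₁ ×̲ g₂ is a nonsplit Lie algebra. -/
open Module

noncomputable section

section AuxLemmas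

open LieAlgebra

/-- Frattini-type argument: in a nilpotent Lie algebra, an ideal which together with the
derived algebra spans everything must be everything. -/
lemma frattini_aux {g : Type*} [LieRing g] [LieAlgebra ℂ g] [LieModule.IsNilpotent g g]
    (N : LieIdeal ℂ g) (h : N ⊔ LieAlgebra.derivedSeries ℂ g 1 = ⊤) : N = ⊤ := by
  have hd : LieAlgebra.derivedSeries ℂ g 1 = LieModule.lowerCentralSeries ℂ g g 1 := by
    rw [LieAlgebra.derivedSeries_def, LieAlgebra.derivedSeriesOfIdeal_succ,
      LieAlgebra.derivedSeriesOfIdeal_zero, LieModule.lowerCentralSeries_succ, LieModule.lowerCentralSeries_zero]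
  have key : ∀ k, LieModule.lowerCentralSeries ℂ g g k ≤ N ⊔ LieModule.lowerCentralSeries ℂ g g (k + 1) := by
    intro k
    induction k with
    | zero =>
      rw [LieModule.lowerCentralSeries_zero, ← hd, ← h]
    | succ k ih =>
      rw [LieModule.lowerCentralSeries_succ]
      calc ⁅(⊤ : LieIdeal ℂ g), LieModule.lowerCentralSeries ℂ g g k⁆
          ≤ ⁅(⊤ : LieIdeal ℂ g), N ⊔ LieModule.lowerCentralSeries ℂ g g (k + 1)⁆ :=
            LieSubmodule.mono_lie le_rfl ih
        _ = ⁅(⊤ : LieIdeal ℂ g), N⁆ ⊔ ⁅(⊤ : LieIdeal ℂ g), LieModule.lowerCentralSeries ℂ g g (k + 1)⁆ :=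
            LieSubmodule.lie_sup _ _ _
        _ ≤ N ⊔ ⁅(⊤ : LieIdeal ℂ g), LieModule.lowerCentralSeries ℂ g g (k + 1)⁆ :=
            sup_le_sup (LieSubmodule.lie_le_right _ _) le_rfl
        _ = N ⊔ LieModule.lowerCentralSeries ℂ g g (k + 2) := by
            rw [LieModule.lowerCentralSeries_succ (R := ℂ) (L := g) (M := g) (k := k + 1)]
  have key2 : ∀ k, (⊤ : LieIdeal ℂ g) ≤ N ⊔ LieModule.lowerCentralSeries ℂ g g k := by
    intro k
    induction k with
    | zero => rw [LieModule.lowerCentralSeries_zero]; exact le_sup_right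
    | succ k ih =>
      refine ih.trans ?_
      refine sup_le le_sup_left ((key k).trans ?_)
      exact sup_le le_sup_left le_sup_right
  obtain ⟨k, hk⟩ := LieModule.IsNilpotent.nilpotent ℂ g g
  have := key2 k
  rw [hk, sup_bot_eq] at this
  exact le_antisymm le_top this

/-- summing scaled singles recovers a function -/
lemma sum_single_aux {n : ℕ} (u : Fin n → ℂ) : ∑ i, u i • (Pi.single i 1 : Fin n → ℂ) = u := by
  funext b
  simp only [Finset.sum_apply, Pi.smul_apply, Pi.single_apply, smul_eq_mul, mul_ite, mul_one,
    mul_zero]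
  simp [Finset.sum_ite_eq]

lemma sum_single_double_aux {n m : ℕ} (v : Fin n → Fin m → ℂ) :
    ∑ i, ∑ j, v i j • (Pi.single i (Pi.single j 1 : Fin m → ℂ) : Fin n → Fin m → ℂ) = v := by
  funext a b
  simp only [Finset.sum_apply, Pi.smul_apply, Pi.single_apply, smul_eq_mul]
  have : ∀ i : Fin n, ∀ j : Fin m,
      (v i j * (if a = i then (Pi.single j 1 : Fin m → ℂ) else 0) b) =
        if a = i then (if b = j then v i j else 0) else 0 := by
    intro i j
    split_ifs with h1 h2
    · subst h1; subst h2; simp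
    · simp [Pi.single_apply, if_neg fun hh => h2 hh]
    · simp
  simp only [this]
  have h2 : ∀ i : Fin n, (∑ j, if a = i then if b = j then v i j else 0 else 0)
      = if a = i then v i b else 0 := by
    intro i
    split_ifs with h
    · simp [Finset.sum_ite_eq]
    · simp
  simp only [h2]
  simp [Finset.sum_ite_eq]

/-- The key linear-algebra fact used for the splitting argument: the "tensor" pairing
cannot vanish on a pair of complementary nonzero subspaces. -/
lemma tensor_split_aux {n1 n2 : ℕ} (h1 : 0 < n1) (h2 : 0 < n2)
    (A B : Submodule ℂ ((Fin n1 → ℂ) × (Fin n2 → ℂ)))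
    (hA : A ≠ ⊥) (hB : B ≠ ⊥) (hsup : A ⊔ B = ⊤) (hinf : A ⊓ B = ⊥)
    (hw : ∀ a ∈ A, ∀ b ∈ B, ∀ i j, a.1 i * b.2 j = b.1 i * a.2 j) : False := by
  have key : ∀ S T : Submodule ℂ ((Fin n1 → ℂ) × (Fin n2 → ℂ)), S ⊓ T = ⊥ → T ≠ ⊥ →
      (∀ s ∈ S, ∀ t ∈ T, ∀ i j, s.1 i * t.2 j = t.1 i * s.2 j) →
      ∀ a ∈ S, a.1 = 0 ∨ a.2 = 0 := by
    intro S T hST hT hrel a ha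
    by_contra hcon
    push_neg at hcon
    obtain ⟨ha1, ha2⟩ := hcon
    obtain ⟨i0, hi0⟩ := Function.ne_iff.mp ha1
    obtain ⟨j0, hj0⟩ := Function.ne_iff.mp ha2
    simp only [Pi.zero_apply] at hi0 hj0
    apply hT
    rw [eq_bot_iff]
    intro b hb
    have hb1 : ∀ i, b.1 i = (b.2 j0 / a.2 j0) * a.1 i := by
      intro i
      rw [div_mul_eq_mul_div, eq_div_iff hj0]
      linear_combination - hrel a ha b hb i j0
    have hb2 : ∀ j, b.2 j = (b.2 j0 / a.2 j0) * a.2 j := by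
      intro j
      have h := hrel a ha b hb i0 j
      rw [hb1 i0] at h
      have h' : a.1 i0 * b.2 j = a.1 i0 * (b.2 j0 / a.2 j0 * a.2 j) := by
        linear_combination h
      exact mul_left_cancel₀ hi0 h'
    have hbel : b = (b.2 j0 / a.2 j0) • a := by
      apply Prod.ext
      · funext i
        simpa using hb1 i
      · funext j
        simpa using hb2 j
    have hbS : b ∈ S := by
      rw [hbel]; exact S.smul_mem _ ha
    have : b ∈ S ⊓ T := ⟨hbS, hb⟩
    rw [hST] at this
    simpa using this
  have hAz : ∀ a ∈ A, a.1 = 0 ∨ a.2 = 0 := key A B hinf hB hw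
  have hBz : ∀ b ∈ B, b.1 = 0 ∨ b.2 = 0 := by
    refine key B A (by rw [inf_comm]; exact hinf) hA ?_
    intro s hs t ht i j
    exact (hw t ht s hs i j).symm
  have dich : ∀ S : Submodule ℂ ((Fin n1 → ℂ) × (Fin n2 → ℂ)),
      (∀ a ∈ S, a.1 = 0 ∨ a.2 = 0) → (∀ a ∈ S, a.1 = 0) ∨ (∀ a ∈ S, a.2 = 0) := by
    intro S hS
    by_contra hc
    push_neg at hc
    obtain ⟨⟨s, hs, hs1⟩, ⟨t, ht, ht2⟩⟩ := hc
    have hs2 : s.2 = 0 := (hS s hs).resolve_left hs1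
    have ht1 : t.1 = 0 := (hS t ht).resolve_right ht2
    rcases hS (s + t) (S.add_mem hs ht) with h | h
    · apply hs1
      have : s.1 + t.1 = 0 := h
      rwa [ht1, add_zero] at this
    · apply ht2
      have : s.2 + t.2 = 0 := h
      rwa [hs2, zero_add] at this
  set i0 : Fin n1 := ⟨0, h1⟩
  set j0 : Fin n2 := ⟨0, h2⟩
  have hsing1 : (Pi.single i0 1 : Fin n1 → ℂ) i0 = 1 := by simp
  have hsing2 : (Pi.single j0 1 : Fin n2 → ℂ) j0 = 1 := by simp
  rcases dich A hAz with hA1 | hA2 <;> rcases dich B hBz with hB1 | hB2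
  · -- A and B both have vanishing first components
    have hmem : ((Pi.single i0 1, 0) : (Fin n1 → ℂ) × (Fin n2 → ℂ)) ∈ A ⊔ B := by
      rw [hsup]; trivial
    obtain ⟨a, ha, b, hb, hab⟩ := Submodule.mem_sup.mp hmem
    have : a.1 + b.1 = Pi.single i0 1 := congrArg Prod.fst hab
    rw [hA1 a ha, hB1 b hb, add_zero] at this
    have := congrFun this i0
    rw [hsing1] at this
    simp at this
  · -- A first components vanish, B second components vanish
    have hmem : ((Pi.single i0 1, Pi.single j0 1) : (Fin n1 → ℂ) × (Fin n2 → ℂ)) ∈ A ⊔ B := by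
      rw [hsup]; trivial
    obtain ⟨a, ha, b, hb, hab⟩ := Submodule.mem_sup.mp hmem
    have e1 : a.1 + b.1 = Pi.single i0 1 := congrArg Prod.fst hab
    have e2 : a.2 + b.2 = Pi.single j0 1 := congrArg Prod.snd hab
    rw [hA1 a ha, zero_add] at e1
    rw [hB2 b hb, add_zero] at e2
    have h := hw a ha b hb i0 j0
    rw [hA1 a ha, hB2 b hb, e1, e2] at h
    rw [hsing1, hsing2] at h
    simp at h
  · -- A second components vanish, B first components vanish
    have hmem : ((Pi.single i0 1, Pi.single j0 1) : (Fin n1 → ℂ) × (Fin n2 → ℂ)) ∈ A ⊔ B := by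
      rw [hsup]; trivial
    obtain ⟨a, ha, b, hb, hab⟩ := Submodule.mem_sup.mp hmem
    have e1 : a.1 + b.1 = Pi.single i0 1 := congrArg Prod.fst hab
    have e2 : a.2 + b.2 = Pi.single j0 1 := congrArg Prod.snd hab
    rw [hB1 b hb, add_zero] at e1
    rw [hA2 a ha, zero_add] at e2
    have h := hw a ha b hb i0 j0
    rw [hA2 a ha, hB1 b hb, e1, e2] at h
    rw [hsing1, hsing2] at h
    simp at h
  · -- A and B both have vanishing second components
    have hmem : ((0, Pi.single j0 1) : (Fin n1 → ℂ) × (Fin n2 → ℂ)) ∈ A ⊔ B := by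
      rw [hsup]; trivial
    obtain ⟨a, ha, b, hb, hab⟩ := Submodule.mem_sup.mp hmem
    have : a.2 + b.2 = Pi.single j0 1 := congrArg Prod.snd hab
    rw [hA2 a ha, hB2 b hb, add_zero] at this
    have := congrFun this j0
    rw [hsing2] at this
    simp at this

end AuxLemmas
namespace PBGAux

open LieAlgebra

variable {L g1 g2 : Type*} [LieRing L] [LieAlgebra ℂ L]
  [LieRing g1] [LieAlgebra ℂ g1] [LieRing g2] [LieAlgebra ℂ g2]
  (P : IsProductByGenerators L g1 g2)

/-- coordinates of `g1` on the first `n1` basis vectors -/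
def phi1 : g1 →ₗ[ℂ] (Fin P.n1 → ℂ) where
  toFun x := fun i => P.b1.repr x (Fin.castLE P.n1_le i)
  map_add' x y := by funext i; simp
  map_smul' c x := by funext i; simp

/-- coordinates of `g2` on the first `n2` basis vectors -/
def phi2 : g2 →ₗ[ℂ] (Fin P.n2 → ℂ) where
  toFun y := fun j => P.b2.repr y (Fin.castLE P.n2_le j)
  map_add' x y := by funext i; simp
  map_smul' c x := by funext i; simp

lemma phi1_b1 (i : Fin P.m1) :
    phi1 P (P.b1 i) = if h : (i : ℕ) < P.n1 then Pi.single (⟨i, h⟩ : Fin P.n1) 1 else 0 := by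
  have base : ∀ k : Fin P.n1, phi1 P (P.b1 i) k
      = if i = Fin.castLE P.n1_le k then 1 else 0 := by
    intro k
    show (P.b1.repr (P.b1 i)) (Fin.castLE P.n1_le k) = _
    rw [Basis.repr_self, Finsupp.single_apply]
  by_cases h : (i : ℕ) < P.n1
  · rw [dif_pos h]
    funext k
    rw [base k, Pi.single_apply]
    rcases eq_or_ne ((k : ℕ)) ((i : ℕ)) with hk | hk
    · have c1 : i = Fin.castLE P.n1_le k := Fin.ext (by simpa using hk.symm)
      have c2 : k = (⟨i, h⟩ : Fin P.n1) := Fin.ext hk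
      rw [if_pos c1, if_pos c2]
    · have c1 : i ≠ Fin.castLE P.n1_le k := fun hc => hk (by simpa [Fin.ext_iff] using hc.symm)
      have c2 : k ≠ (⟨i, h⟩ : Fin P.n1) := fun hc => hk (by simpa [Fin.ext_iff] using hc)
      rw [if_neg c1, if_neg c2]
  · rw [dif_neg h]
    funext k
    rw [base k, if_neg, Pi.zero_apply]
    intro hc
    apply h
    have hic : (i : ℕ) = (k : ℕ) := by simpa [Fin.ext_iff] using hc
    rw [hic]
    exact k.isLt

lemma phi2_b2 (j : Fin P.m2) :
    phi2 P (P.b2 j) = if h : (j : ℕ) < P.n2 then Pi.single (⟨j, h⟩ : Fin P.n2) 1 else 0 := by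
  have base : ∀ k : Fin P.n2, phi2 P (P.b2 j) k
      = if j = Fin.castLE P.n2_le k then 1 else 0 := by
    intro k
    show (P.b2.repr (P.b2 j)) (Fin.castLE P.n2_le k) = _
    rw [Basis.repr_self, Finsupp.single_apply]
  by_cases h : (j : ℕ) < P.n2
  · rw [dif_pos h]
    funext k
    rw [base k, Pi.single_apply]
    rcases eq_or_ne ((k : ℕ)) ((j : ℕ)) with hk | hk
    · have c1 : j = Fin.castLE P.n2_le k := Fin.ext (by simpa using hk.symm)
      have c2 : k = (⟨j, h⟩ : Fin P.n2) := Fin.ext hk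
      rw [if_pos c1, if_pos c2]
    · have c1 : j ≠ Fin.castLE P.n2_le k := fun hc => hk (by simpa [Fin.ext_iff] using hc.symm)
      have c2 : k ≠ (⟨j, h⟩ : Fin P.n2) := fun hc => hk (by simpa [Fin.ext_iff] using hc)
      rw [if_neg c1, if_neg c2]
  · rw [dif_neg h]
    funext k
    rw [base k, if_neg, Pi.zero_apply]
    intro hc
    apply h
    have hic : (j : ℕ) = (k : ℕ) := by simpa [Fin.ext_iff] using hc
    rw [hic]
    exact k.isLt

/-- `phi1` vanishes precisely on the span of the later basis vectors. -/
lemma phi1_eq_zero_iff (x : g1) :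
    phi1 P x = 0 ↔ x ∈ Submodule.span ℂ (⇑P.b1 '' {i : Fin P.m1 | P.n1 ≤ (i : ℕ)}) := by
  rw [Basis.mem_span_image]
  constructor
  · intro h i hi
    by_contra hlt
    simp only [Set.mem_setOf_eq, not_le] at hlt
    have h0 := congrFun h ⟨(i : ℕ), hlt⟩
    have hcast : Fin.castLE P.n1_le (⟨(i : ℕ), hlt⟩ : Fin P.n1) = i := Fin.ext rfl
    simp only [Pi.zero_apply] at h0
    rw [show phi1 P x (⟨(i : ℕ), hlt⟩ : Fin P.n1)
        = P.b1.repr x (Fin.castLE P.n1_le ⟨(i : ℕ), hlt⟩) from rfl, hcast] at h0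
    exact (Finsupp.mem_support_iff.mp hi) h0
  · intro h
    funext k
    have : Fin.castLE P.n1_le k ∉ (P.b1.repr x).support := by
      intro hc
      have := h hc
      simp only [Set.mem_setOf_eq, Fin.coe_castLE] at this
      exact absurd this (by simpa using k.isLt.not_ge)
    have h0 := Finsupp.notMem_support_iff.mp this
    exact h0

lemma phi2_eq_zero_iff (y : g2) :
    phi2 P y = 0 ↔ y ∈ Submodule.span ℂ (⇑P.b2 '' {j : Fin P.m2 | P.n2 ≤ (j : ℕ)}) := by
  rw [Basis.mem_span_image]
  constructor
  · intro h j hj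
    by_contra hlt
    simp only [Set.mem_setOf_eq, not_le] at hlt
    have h0 := congrFun h ⟨(j : ℕ), hlt⟩
    have hcast : Fin.castLE P.n2_le (⟨(j : ℕ), hlt⟩ : Fin P.n2) = j := Fin.ext rfl
    simp only [Pi.zero_apply] at h0
    rw [show phi2 P y (⟨(j : ℕ), hlt⟩ : Fin P.n2)
        = P.b2.repr y (Fin.castLE P.n2_le ⟨(j : ℕ), hlt⟩) from rfl, hcast] at h0
    exact (Finsupp.mem_support_iff.mp hj) h0
  · intro h
    funext k
    have : Fin.castLE P.n2_le k ∉ (P.b2.repr y).support := by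
      intro hc
      have := h hc
      simp only [Set.mem_setOf_eq, Fin.coe_castLE] at this
      exact absurd this (by simpa using k.isLt.not_ge)
    have h0 := Finsupp.notMem_support_iff.mp this
    exact h0

/-- the span of the later basis vectors is exactly the derived subalgebra -/
lemma span_later_eq1 :
    Submodule.span ℂ (⇑P.b1 '' {i : Fin P.m1 | P.n1 ≤ (i : ℕ)})
      = (LieAlgebra.derivedSeries ℂ g1 1).toSubmodule := by
  refine le_antisymm ?_ P.adapted1
  intro x hx
  have hxt : x ∈ Submodule.span ℂ (⇑P.b1 '' {i : Fin P.m1 | (i : ℕ) < P.n1}) ⊔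
      (LieAlgebra.derivedSeries ℂ g1 1).toSubmodule := P.gen1 ▸ Submodule.mem_top
  obtain ⟨s, hs, d, hd, hsd⟩ := Submodule.mem_sup.mp hxt
  have hd' : d ∈ Submodule.span ℂ (⇑P.b1 '' {i : Fin P.m1 | P.n1 ≤ (i : ℕ)}) := P.adapted1 hd
  have hs' : s ∈ Submodule.span ℂ (⇑P.b1 '' {i : Fin P.m1 | P.n1 ≤ (i : ℕ)}) := by
    have : s = x - d := by rw [← hsd]; abel
    rw [this]
    exact sub_mem hx hd'
  have hsup1 := P.b1.mem_span_image.mp hs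
  have hsup2 := P.b1.mem_span_image.mp hs'
  have hrepr : P.b1.repr s = 0 := by
    ext i
    by_contra hne
    have hi : i ∈ (P.b1.repr s).support := Finsupp.mem_support_iff.mpr hne
    have h1 := hsup1 hi
    have h2 := hsup2 hi
    simp only [Set.mem_setOf_eq] at h1 h2
    omega
  have hs0 : s = 0 := by
    have := congrArg (P.b1.repr.symm) hrepr
    simpa using this
  rw [← hsd, hs0, zero_add]
  exact hd

lemma span_later_eq2 :
    Submodule.span ℂ (⇑P.b2 '' {j : Fin P.m2 | P.n2 ≤ (j : ℕ)})
      = (LieAlgebra.derivedSeries ℂ g2 1).toSubmodule := by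
  refine le_antisymm ?_ P.adapted2
  intro x hx
  have hxt : x ∈ Submodule.span ℂ (⇑P.b2 '' {j : Fin P.m2 | (j : ℕ) < P.n2}) ⊔
      (LieAlgebra.derivedSeries ℂ g2 1).toSubmodule := P.gen2 ▸ Submodule.mem_top
  obtain ⟨s, hs, d, hd, hsd⟩ := Submodule.mem_sup.mp hxt
  have hd' : d ∈ Submodule.span ℂ (⇑P.b2 '' {j : Fin P.m2 | P.n2 ≤ (j : ℕ)}) := P.adapted2 hd
  have hs' : s ∈ Submodule.span ℂ (⇑P.b2 '' {j : Fin P.m2 | P.n2 ≤ (j : ℕ)}) := by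
    have : s = x - d := by rw [← hsd]; abel
    rw [this]
    exact sub_mem hx hd'
  have hsup1 := P.b2.mem_span_image.mp hs
  have hsup2 := P.b2.mem_span_image.mp hs'
  have hrepr : P.b2.repr s = 0 := by
    ext j
    by_contra hne
    have hj : j ∈ (P.b2.repr s).support := Finsupp.mem_support_iff.mpr hne
    have h1 := hsup1 hj
    have h2 := hsup2 hj
    simp only [Set.mem_setOf_eq] at h1 h2
    omega
  have hs0 : s = 0 := by
    have := congrArg (P.b2.repr.symm) hrepr
    simpa using this
  rw [← hsd, hs0, zero_add]
  exact hd

end PBGAux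
namespace PBGAux

open LieAlgebra

variable {L g1 g2 : Type*} [LieRing L] [LieAlgebra ℂ L]
  [LieRing g1] [LieAlgebra ℂ g1] [LieRing g2] [LieAlgebra ℂ g2]
  (P : IsProductByGenerators L g1 g2)

/-- the cocycle factors through the coordinates on the generators -/
lemma Phi_apply (x : g1) (y : g2) :
    P.Φ x y = fun i j => phi1 P x i * phi2 P y j := by
  have key : P.Φ = LinearMap.mk₂ ℂ (fun (x : g1) (y : g2) (i : Fin P.n1) (j : Fin P.n2) =>
      phi1 P x i * phi2 P y j)
      (fun x x' y => by funext i j; simp [add_mul])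
      (fun c x y => by funext i j; simp [smul_eq_mul]; ring)
      (fun x y y' => by funext i j; simp [mul_add])
      (fun c x y => by funext i j; simp [smul_eq_mul]; ring) := by
    apply P.b1.ext
    intro i
    apply P.b2.ext
    intro j
    rw [P.hΦ i j]
    show _ = fun a b => phi1 P (P.b1 i) a * phi2 P (P.b2 j) b
    rw [phi1_b1, phi2_b2]
    by_cases h1 : (i : ℕ) < P.n1
    · by_cases h2 : (j : ℕ) < P.n2
      · rw [dif_pos (⟨h1, h2⟩ : (i : ℕ) < P.n1 ∧ (j : ℕ) < P.n2), dif_pos h1, dif_pos h2]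
        funext a b
        rcases eq_or_ne a (⟨i, h1⟩ : Fin P.n1) with rfl | ha
        · simp [Pi.single_apply]
        · simp [Pi.single_eq_of_ne ha]
      · rw [dif_neg (by tauto), dif_neg h2]
        funext a b
        simp
    · rw [dif_neg (by tauto), dif_neg h1]
      funext a b
      simp
  rw [key]
  rfl

/-- linear inclusion of `g1` -/
def j1 : g1 →ₗ[ℂ] L :=
  P.e.toLinearMap ∘ₗ LinearMap.inl ℂ g1 (g2 × (Fin P.n1 → Fin P.n2 → ℂ))

/-- linear inclusion of `g2` -/
def j2 : g2 →ₗ[ℂ] L :=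
  P.e.toLinearMap ∘ₗ (LinearMap.inr ℂ g1 (g2 × (Fin P.n1 → Fin P.n2 → ℂ))) ∘ₗ
    LinearMap.inl ℂ g2 (Fin P.n1 → Fin P.n2 → ℂ)

/-- linear inclusion of the center -/
def j3 : (Fin P.n1 → Fin P.n2 → ℂ) →ₗ[ℂ] L :=
  P.e.toLinearMap ∘ₗ (LinearMap.inr ℂ g1 (g2 × (Fin P.n1 → Fin P.n2 → ℂ))) ∘ₗ
    LinearMap.inr ℂ g2 (Fin P.n1 → Fin P.n2 → ℂ)

/-- linear projections -/
def rho1 : L →ₗ[ℂ] g1 :=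
  LinearMap.fst ℂ g1 (g2 × (Fin P.n1 → Fin P.n2 → ℂ)) ∘ₗ P.e.symm.toLinearMap

def rho2 : L →ₗ[ℂ] g2 :=
  LinearMap.fst ℂ g2 (Fin P.n1 → Fin P.n2 → ℂ) ∘ₗ
    LinearMap.snd ℂ g1 (g2 × (Fin P.n1 → Fin P.n2 → ℂ)) ∘ₗ P.e.symm.toLinearMap

def rho3 : L →ₗ[ℂ] (Fin P.n1 → Fin P.n2 → ℂ) :=
  LinearMap.snd ℂ g2 (Fin P.n1 → Fin P.n2 → ℂ) ∘ₗ
    LinearMap.snd ℂ g1 (g2 × (Fin P.n1 → Fin P.n2 → ℂ)) ∘ₗ P.e.symm.toLinearMap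

@[simp] lemma j1_apply (x : g1) : j1 P x = P.e (x, 0, 0) := rfl
@[simp] lemma j2_apply (y : g2) : j2 P y = P.e (0, y, 0) := rfl
@[simp] lemma j3_apply (v : Fin P.n1 → Fin P.n2 → ℂ) : j3 P v = P.e (0, 0, v) := rfl
@[simp] lemma rho1_apply (z : L) : rho1 P z = (P.e.symm z).1 := rfl
@[simp] lemma rho2_apply (z : L) : rho2 P z = (P.e.symm z).2.1 := rfl
@[simp] lemma rho3_apply (z : L) : rho3 P z = (P.e.symm z).2.2 := rfl

@[simp] lemma rho1_j1 (x : g1) : rho1 P (j1 P x) = x := by simp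
@[simp] lemma rho2_j1 (x : g1) : rho2 P (j1 P x) = 0 := by simp
@[simp] lemma rho1_j2 (y : g2) : rho1 P (j2 P y) = 0 := by simp
@[simp] lemma rho2_j2 (y : g2) : rho2 P (j2 P y) = y := by simp

/-- decomposing the bracket -/
lemma esymm_bracket (z w : L) : P.e.symm ⁅z, w⁆ =
    (⁅rho1 P z, rho1 P w⁆, ⁅rho2 P z, rho2 P w⁆,
      P.Φ (rho1 P z) (rho2 P w) - P.Φ (rho1 P w) (rho2 P z)) := by
  have h := P.bracket_eq (P.e.symm z) (P.e.symm w)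
  rw [LinearEquiv.apply_symm_apply, LinearEquiv.apply_symm_apply] at h
  rw [h, LinearEquiv.symm_apply_apply]
  rfl

lemma rho1_bracket (z w : L) : rho1 P ⁅z, w⁆ = ⁅rho1 P z, rho1 P w⁆ := by
  rw [rho1_apply, esymm_bracket]

lemma rho2_bracket (z w : L) : rho2 P ⁅z, w⁆ = ⁅rho2 P z, rho2 P w⁆ := by
  rw [rho2_apply, esymm_bracket]

lemma rho3_bracket (z w : L) :
    rho3 P ⁅z, w⁆ = P.Φ (rho1 P z) (rho2 P w) - P.Φ (rho1 P w) (rho2 P z) := by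
  rw [rho3_apply, esymm_bracket]

/-- brackets of the inclusions -/
lemma j1_bracket (x x' : g1) : ⁅j1 P x, j1 P x'⁆ = j1 P ⁅x, x'⁆ := by
  rw [j1_apply, j1_apply, j1_apply, P.bracket_eq]
  simp

lemma j2_bracket (y y' : g2) : ⁅j2 P y, j2 P y'⁆ = j2 P ⁅y, y'⁆ := by
  rw [j2_apply, j2_apply, j2_apply, P.bracket_eq]
  simp

lemma j1_j2_bracket (x : g1) (y : g2) : ⁅j1 P x, j2 P y⁆ = j3 P (P.Φ x y) := by
  rw [j1_apply, j2_apply, j3_apply, P.bracket_eq]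
  simp

/-- the projection onto the coordinates of the generators -/
def piL : L →ₗ[ℂ] (Fin P.n1 → ℂ) × (Fin P.n2 → ℂ) :=
  (phi1 P ∘ₗ rho1 P).prod (phi2 P ∘ₗ rho2 P)

@[simp] lemma piL_apply (z : L) : piL P z = (phi1 P (rho1 P z), phi2 P (rho2 P z)) := rfl

lemma phi1_derived (x : g1) (hx : x ∈ (LieAlgebra.derivedSeries ℂ g1 1).toSubmodule) :
    phi1 P x = 0 := by
  rw [phi1_eq_zero_iff, span_later_eq1]
  exact hx

lemma phi2_derived (y : g2) (hy : y ∈ (LieAlgebra.derivedSeries ℂ g2 1).toSubmodule) :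
    phi2 P y = 0 := by
  rw [phi2_eq_zero_iff, span_later_eq2]
  exact hy

lemma lie_mem_derived_aux {g : Type*} [LieRing g] [LieAlgebra ℂ g] (a b : g) :
    ⁅a, b⁆ ∈ (LieAlgebra.derivedSeries ℂ g 1).toSubmodule := by
  rw [LieSubmodule.mem_toSubmodule, LieAlgebra.derivedSeries_def,
    LieAlgebra.derivedSeriesOfIdeal_succ, LieAlgebra.derivedSeriesOfIdeal_zero]
  exact LieSubmodule.lie_mem_lie (LieSubmodule.mem_top a) (LieSubmodule.mem_top b)

/-- `piL` kills all brackets -/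
lemma piL_bracket (z w : L) : piL P ⁅z, w⁆ = 0 := by
  rw [piL_apply, rho1_bracket, rho2_bracket]
  rw [phi1_derived P _ (lie_mem_derived_aux _ _), phi2_derived P _ (lie_mem_derived_aux _ _)]
  rfl

end PBGAux
namespace PBGAux

open LieAlgebra

variable {L g1 g2 : Type*} [LieRing L] [LieAlgebra ℂ L]
  [LieRing g1] [LieAlgebra ℂ g1] [LieRing g2] [LieAlgebra ℂ g2]
  (P : IsProductByGenerators L g1 g2)

/-- `piL` kills everything in a bracket of ideals -/
lemma piL_eq_zero_of_mem_lie (I J : LieIdeal ℂ L) (z : L) (hz : z ∈ ⁅I, J⁆) :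
    piL P z = 0 := by
  have hz' : z ∈ (⁅I, J⁆ : LieIdeal ℂ L).toSubmodule :=
    (LieSubmodule.mem_toSubmodule _).mpr hz
  rw [LieSubmodule.lieIdeal_oper_eq_linear_span] at hz'
  refine Submodule.span_induction ?_ ?_ ?_ ?_ hz'
  · rintro m ⟨⟨x, hx⟩, ⟨n, hn⟩, rfl⟩
    exact piL_bracket P x n
  · exact map_zero _
  · intro a b _ _ ha hb
    rw [map_add, ha, hb, add_zero]
  · intro c a _ ha
    rw [map_smul, ha, smul_zero]

/-- elements mapped into the derived algebra of `g1` by the inclusion `j1` -/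
lemma j1_mem_derived (x : g1) (hx : x ∈ (LieAlgebra.derivedSeries ℂ g1 1).toSubmodule) :
    j1 P x ∈ (⁅(⊤ : LieIdeal ℂ L), (⊤ : LieIdeal ℂ L)⁆ : LieIdeal ℂ L).toSubmodule := by
  rw [LieSubmodule.mem_toSubmodule] at hx ⊢
  rw [LieAlgebra.derivedSeries_def, LieAlgebra.derivedSeriesOfIdeal_succ,
    LieAlgebra.derivedSeriesOfIdeal_zero] at hx
  have hx' : x ∈ (⁅(⊤ : LieIdeal ℂ g1), (⊤ : LieIdeal ℂ g1)⁆ : LieIdeal ℂ g1).toSubmodule := (LieSubmodule.mem_toSubmodule _).mpr hx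
  rw [LieSubmodule.lieIdeal_oper_eq_linear_span] at hx'
  have : ∀ m ∈ Submodule.span ℂ {m : g1 | ∃ (a : (⊤ : LieIdeal ℂ g1)) (b : (⊤ : LieIdeal ℂ g1)),
      ⁅(a : g1), (b : g1)⁆ = m}, j1 P m ∈ (⁅(⊤ : LieIdeal ℂ L), (⊤ : LieIdeal ℂ L)⁆ : LieIdeal ℂ L) := by
    intro m hm
    refine Submodule.span_induction ?_ ?_ ?_ ?_ hm
    · rintro m ⟨⟨a, _⟩, ⟨b, _⟩, rfl⟩
      rw [← j1_bracket]
      exact LieSubmodule.lie_mem_lie (LieSubmodule.mem_top _) (LieSubmodule.mem_top _)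
    · rw [map_zero]; exact LieSubmodule.zero_mem _
    · intro a b _ _ ha hb
      rw [map_add]; exact add_mem ha hb
    · intro c a _ ha
      rw [map_smul]; exact SMulMemClass.smul_mem _ ha
  exact this x hx'

lemma j2_mem_derived (y : g2) (hy : y ∈ (LieAlgebra.derivedSeries ℂ g2 1).toSubmodule) :
    j2 P y ∈ (⁅(⊤ : LieIdeal ℂ L), (⊤ : LieIdeal ℂ L)⁆ : LieIdeal ℂ L).toSubmodule := by
  rw [LieSubmodule.mem_toSubmodule] at hy ⊢
  rw [LieAlgebra.derivedSeries_def, LieAlgebra.derivedSeriesOfIdeal_succ,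
    LieAlgebra.derivedSeriesOfIdeal_zero] at hy
  have hy' : y ∈ (⁅(⊤ : LieIdeal ℂ g2), (⊤ : LieIdeal ℂ g2)⁆ : LieIdeal ℂ g2).toSubmodule := (LieSubmodule.mem_toSubmodule _).mpr hy
  rw [LieSubmodule.lieIdeal_oper_eq_linear_span] at hy'
  have : ∀ m ∈ Submodule.span ℂ {m : g2 | ∃ (a : (⊤ : LieIdeal ℂ g2)) (b : (⊤ : LieIdeal ℂ g2)),
      ⁅(a : g2), (b : g2)⁆ = m}, j2 P m ∈ (⁅(⊤ : LieIdeal ℂ L), (⊤ : LieIdeal ℂ L)⁆ : LieIdeal ℂ L) := by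
    intro m hm
    refine Submodule.span_induction ?_ ?_ ?_ ?_ hm
    · rintro m ⟨⟨a, _⟩, ⟨b, _⟩, rfl⟩
      rw [← j2_bracket]
      exact LieSubmodule.lie_mem_lie (LieSubmodule.mem_top _) (LieSubmodule.mem_top _)
    · rw [map_zero]; exact LieSubmodule.zero_mem _
    · intro a b _ _ ha hb
      rw [map_add]; exact add_mem ha hb
    · intro c a _ ha
      rw [map_smul]; exact SMulMemClass.smul_mem _ ha
  exact this y hy'

lemma j3_mem_derived (v : Fin P.n1 → Fin P.n2 → ℂ) :
    j3 P v ∈ (⁅(⊤ : LieIdeal ℂ L), (⊤ : LieIdeal ℂ L)⁆ : LieIdeal ℂ L).toSubmodule := by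
  have hv : v = ∑ i, ∑ j, v i j • (Pi.single i (Pi.single j 1 : Fin P.n2 → ℂ) :
      Fin P.n1 → Fin P.n2 → ℂ) := (sum_single_double_aux v).symm
  have hbr : ∀ (i : Fin P.n1) (j : Fin P.n2),
      j3 P (Pi.single i (Pi.single j 1 : Fin P.n2 → ℂ)) =
        ⁅j1 P (P.b1 (Fin.castLE P.n1_le i)), j2 P (P.b2 (Fin.castLE P.n2_le j))⁆ := by
    intro i j
    rw [j1_j2_bracket, P.hΦ]
    have h1 : ((Fin.castLE P.n1_le i : Fin P.m1) : ℕ) < P.n1 := i.isLt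
    have h2 : ((Fin.castLE P.n2_le j : Fin P.m2) : ℕ) < P.n2 := j.isLt
    rw [dif_pos (⟨h1, h2⟩ : _ ∧ _)]
    have e1 : (⟨((Fin.castLE P.n1_le i : Fin P.m1) : ℕ), h1⟩ : Fin P.n1) = i := Fin.ext rfl
    have e2 : (⟨((Fin.castLE P.n2_le j : Fin P.m2) : ℕ), h2⟩ : Fin P.n2) = j := Fin.ext rfl
    rw [e1, e2]
  rw [show v = ∑ i, ∑ j, v i j • (Pi.single i (Pi.single j 1 : Fin P.n2 → ℂ) :
      Fin P.n1 → Fin P.n2 → ℂ) from (sum_single_double_aux v).symm]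
  rw [map_sum]
  refine Submodule.sum_mem _ fun i _ => ?_
  rw [map_sum]
  refine Submodule.sum_mem _ fun j _ => ?_
  rw [map_smul]
  refine Submodule.smul_mem _ _ ?_
  rw [hbr i j, LieSubmodule.mem_toSubmodule]
  exact LieSubmodule.lie_mem_lie (LieSubmodule.mem_top _) (LieSubmodule.mem_top _)

/-- the kernel of `piL` is inside the derived algebra of `L` -/
lemma mem_derived_of_piL_eq_zero (z : L) (h : piL P z = 0) :
    z ∈ (⁅(⊤ : LieIdeal ℂ L), (⊤ : LieIdeal ℂ L)⁆ : LieIdeal ℂ L).toSubmodule := by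
  have h1 : phi1 P (rho1 P z) = 0 := congrArg Prod.fst h
  have h2 : phi2 P (rho2 P z) = 0 := congrArg Prod.snd h
  have hz : z = j1 P (rho1 P z) + j2 P (rho2 P z) + j3 P (rho3 P z) := by
    apply P.e.symm.injective
    simp [Prod.ext_iff]
  rw [hz]
  refine Submodule.add_mem _ (Submodule.add_mem _ ?_ ?_) ?_
  · exact j1_mem_derived P (rho1 P z) (by rw [← span_later_eq1 P]; exact (phi1_eq_zero_iff P _).mp h1)
  · exact j2_mem_derived P (rho2 P z) (by rw [← span_later_eq2 P]; exact (phi2_eq_zero_iff P _).mp h2)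
  · exact j3_mem_derived P _

/-- `piL` is surjective -/
lemma piL_surjective : Function.Surjective (piL P) := by
  intro u
  refine ⟨j1 P (∑ i, u.1 i • P.b1 (Fin.castLE P.n1_le i))
    + j2 P (∑ j, u.2 j • P.b2 (Fin.castLE P.n2_le j)), ?_⟩
  have key1 : phi1 P (∑ i, u.1 i • P.b1 (Fin.castLE P.n1_le i)) = u.1 := by
    rw [map_sum]
    have hsingle : ∀ i : Fin P.n1, phi1 P (u.1 i • P.b1 (Fin.castLE P.n1_le i))
        = u.1 i • (Pi.single i 1 : Fin P.n1 → ℂ) := by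
      intro i
      rw [map_smul, phi1_b1,
        dif_pos (show ((Fin.castLE P.n1_le i : Fin P.m1) : ℕ) < P.n1 from i.isLt)]
      exact congrArg _ (congrArg (fun t => Pi.single t (1 : ℂ)) (Fin.ext rfl))
    simp only [hsingle]
    exact sum_single_aux u.1
  have key2 : phi2 P (∑ j, u.2 j • P.b2 (Fin.castLE P.n2_le j)) = u.2 := by
    rw [map_sum]
    have hsingle : ∀ j : Fin P.n2, phi2 P (u.2 j • P.b2 (Fin.castLE P.n2_le j))
        = u.2 j • (Pi.single j 1 : Fin P.n2 → ℂ) := by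
      intro j
      rw [map_smul, phi2_b2,
        dif_pos (show ((Fin.castLE P.n2_le j : Fin P.m2) : ℕ) < P.n2 from j.isLt)]
      exact congrArg _ (congrArg (fun t => Pi.single t (1 : ℂ)) (Fin.ext rfl))
    simp only [hsingle]
    exact sum_single_aux u.2
  rw [map_add]
  simp only [piL_apply, rho1_j1, rho2_j1, rho1_j2, rho2_j2, map_zero]
  rw [Prod.mk_add_mk, add_zero, zero_add, key1, key2]

end PBGAux
namespace PBGAux

open LieAlgebra

variable {L g1 g2 : Type*} [LieRing L] [LieAlgebra ℂ L]
  [LieRing g1] [LieAlgebra ℂ g1] [LieRing g2] [LieAlgebra ℂ g2]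

/-- the degenerate case: a direct summand contained in the kernel of `piL` leads to a
contradiction. -/
lemma degenerate [LieModule.IsNilpotent g1 g1] [LieModule.IsNilpotent g2 g2]
    (P : IsProductByGenerators L g1 g2) (I J : LieIdeal ℂ L) (hI : I ≠ ⊥)
    (hinf : I ⊓ J = ⊥) (hsup : I ⊔ J = ⊤) (hIker : ∀ z ∈ I, piL P z = 0) : False := by
  classical
  -- the image of J in g1 is an ideal
  set N1 : LieIdeal ℂ g1 :=
    { Submodule.map (rho1 P) J.toSubmodule with
      lie_mem := by
        rintro x m hm
        obtain ⟨w, hw, rfl⟩ := Submodule.mem_map.mp hm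
        refine Submodule.mem_map.mpr ⟨⁅j1 P x, w⁆, ?_, by rw [rho1_bracket, rho1_j1]⟩
        exact (LieSubmodule.mem_toSubmodule _).mpr
          (J.lie_mem ((LieSubmodule.mem_toSubmodule _).mp hw)) } with hN1def
  set N2 : LieIdeal ℂ g2 :=
    { Submodule.map (rho2 P) J.toSubmodule with
      lie_mem := by
        rintro x m hm
        obtain ⟨w, hw, rfl⟩ := Submodule.mem_map.mp hm
        refine Submodule.mem_map.mpr ⟨⁅j2 P x, w⁆, ?_, by rw [rho2_bracket, rho2_j2]⟩
        exact (LieSubmodule.mem_toSubmodule _).mpr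
          (J.lie_mem ((LieSubmodule.mem_toSubmodule _).mp hw)) } with hN2def
  have hN1sub : N1.toSubmodule = Submodule.map (rho1 P) J.toSubmodule := rfl
  have hN2sub : N2.toSubmodule = Submodule.map (rho2 P) J.toSubmodule := rfl
  -- Frattini argument: N1 is everything
  have hN1top : N1 = ⊤ := by
    apply frattini_aux
    rw [← LieSubmodule.toSubmodule_inj, LieSubmodule.sup_toSubmodule,
      LieSubmodule.top_toSubmodule]
    apply le_antisymm le_top
    intro x _
    have hx : j1 P x ∈ I ⊔ J := by rw [hsup]; exact LieSubmodule.mem_top _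
    obtain ⟨a, ha, b, hb, hab⟩ := (LieSubmodule.mem_sup _ _ _).mp hx
    have hxab : x = rho1 P a + rho1 P b := by rw [← map_add, hab, rho1_j1]
    rw [hxab]
    apply Submodule.add_mem
    · apply Submodule.mem_sup_right
      rw [← span_later_eq1 P]
      exact (phi1_eq_zero_iff P _).mp (congrArg Prod.fst (hIker a ha))
    · apply Submodule.mem_sup_left
      rw [hN1sub]
      exact Submodule.mem_map.mpr ⟨b, (LieSubmodule.mem_toSubmodule _).mpr hb, rfl⟩
  have hN2top : N2 = ⊤ := by
    apply frattini_aux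
    rw [← LieSubmodule.toSubmodule_inj, LieSubmodule.sup_toSubmodule,
      LieSubmodule.top_toSubmodule]
    apply le_antisymm le_top
    intro y _
    have hy : j2 P y ∈ I ⊔ J := by rw [hsup]; exact LieSubmodule.mem_top _
    obtain ⟨a, ha, b, hb, hab⟩ := (LieSubmodule.mem_sup _ _ _).mp hy
    have hyab : y = rho2 P a + rho2 P b := by rw [← map_add, hab, rho2_j2]
    rw [hyab]
    apply Submodule.add_mem
    · apply Submodule.mem_sup_right
      rw [← span_later_eq2 P]
      exact (phi2_eq_zero_iff P _).mp (congrArg Prod.snd (hIker a ha))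
    · apply Submodule.mem_sup_left
      rw [hN2sub]
      exact Submodule.mem_map.mpr ⟨b, (LieSubmodule.mem_toSubmodule _).mpr hb, rfl⟩
  -- every element of I is central
  have hcent : ∀ z ∈ I, ∀ w : L, ⁅z, w⁆ = 0 := by
    intro z hz w
    have hzJ : ∀ w' ∈ J, ⁅z, w'⁆ = 0 := by
      intro w' hw'
      have h1 : ⁅z, w'⁆ ∈ I := by rw [← lie_skew]; exact neg_mem (I.lie_mem hz)
      have h2 : ⁅z, w'⁆ ∈ J := J.lie_mem hw'
      have hmem : ⁅z, w'⁆ ∈ I ⊓ J := (LieSubmodule.mem_inf _ _ _).mpr ⟨h1, h2⟩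
      rw [hinf] at hmem
      exact (LieSubmodule.mem_bot _).mp hmem
    have hg1 : ∀ a : g1, ⁅rho1 P z, a⁆ = 0 := by
      intro a
      have ha : a ∈ N1.toSubmodule := by rw [hN1top]; exact LieSubmodule.mem_top a
      rw [hN1sub] at ha
      obtain ⟨w', hw', rfl⟩ := Submodule.mem_map.mp ha
      rw [← rho1_bracket P z w', hzJ w' ((LieSubmodule.mem_toSubmodule _).mp hw'), map_zero]
    have hg2 : ∀ a : g2, ⁅rho2 P z, a⁆ = 0 := by
      intro a
      have ha : a ∈ N2.toSubmodule := by rw [hN2top]; exact LieSubmodule.mem_top a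
      rw [hN2sub] at ha
      obtain ⟨w', hw', rfl⟩ := Submodule.mem_map.mp ha
      rw [← rho2_bracket P z w', hzJ w' ((LieSubmodule.mem_toSubmodule _).mp hw'), map_zero]
    have hp1 : phi1 P (rho1 P z) = 0 := congrArg Prod.fst (hIker z hz)
    have hp2 : phi2 P (rho2 P z) = 0 := congrArg Prod.snd (hIker z hz)
    apply P.e.symm.injective
    rw [esymm_bracket, map_zero]
    have hPhi1 : P.Φ (rho1 P z) (rho2 P w) = 0 := by
      rw [Phi_apply]
      funext i j
      rw [congrFun hp1 i]
      simp
    have hPhi2 : P.Φ (rho1 P w) (rho2 P z) = 0 := by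
      rw [Phi_apply]
      funext i j
      rw [congrFun hp2 j]
      simp
    rw [hg1 (rho1 P w), hg2 (rho2 P w), hPhi1, hPhi2, sub_zero]
    rfl
  -- the derived algebra is inside J
  have hderJ : (⁅(⊤ : LieIdeal ℂ L), (⊤ : LieIdeal ℂ L)⁆ : LieIdeal ℂ L) ≤ J := by
    conv_lhs => rw [← hsup]
    rw [LieSubmodule.sup_lie, LieSubmodule.lie_sup, LieSubmodule.lie_sup]
    have hII : (⁅I, (I : LieSubmodule ℂ L L)⁆ : LieSubmodule ℂ L L) = ⊥ :=
      (LieSubmodule.lie_eq_bot_iff _ _).mpr fun x hx m _ => hcent x hx m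
    have hIJ : (⁅I, (J : LieSubmodule ℂ L L)⁆ : LieSubmodule ℂ L L) = ⊥ :=
      (LieSubmodule.lie_eq_bot_iff _ _).mpr fun x hx m _ => hcent x hx m
    refine sup_le (sup_le ?_ ?_) (sup_le ?_ ?_)
    · rw [hII]; exact bot_le
    · rw [hIJ]; exact bot_le
    · exact LieSubmodule.lie_le_left _ _
    · exact LieSubmodule.lie_le_left _ _
  -- hence I ≤ J, so I = ⊥
  have hIJle : I ≤ J := by
    intro z hz
    have hd := mem_derived_of_piL_eq_zero P z (hIker z hz)
    exact hderJ ((LieSubmodule.mem_toSubmodule _).mp hd)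
  apply hI
  rw [eq_bot_iff, ← hinf]
  exact le_inf le_rfl hIJle

end PBGAux
/-- any product by generators of two nonabelian nilpotent Lie algebras
(split or not) is nonsplit. -/
theorem statement_2 (L g1 g2 : Type) [LieRing L] [LieAlgebra ℂ L]
    [LieRing g1] [LieAlgebra ℂ g1] [LieRing g2] [LieAlgebra ℂ g2]
    [FiniteDimensional ℂ g1] [FiniteDimensional ℂ g2]
    [LieModule.IsNilpotent g1 g1] [LieModule.IsNilpotent g2 g2]
    (hna1 : LieAlgebra.Nonabelian g1) (hna2 : LieAlgebra.Nonabelian g2)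
    (P : IsProductByGenerators L g1 g2) :
    LieAlgebra.Nonsplit ℂ L := by
  classical
  rintro ⟨I, J, hI, hJ, hinf, hsup⟩
  by_cases hIz : ∀ z ∈ I, PBGAux.piL P z = 0
  · exact PBGAux.degenerate P I J hI hinf hsup hIz
  by_cases hJz : ∀ z ∈ J, PBGAux.piL P z = 0
  · exact PBGAux.degenerate P J I hJ (by rw [inf_comm]; exact hinf)
      (by rw [sup_comm]; exact hsup) hJz
  push_neg at hIz hJz
  obtain ⟨zI, hzI, hzI0⟩ := hIz
  obtain ⟨zJ, hzJ, hzJ0⟩ := hJz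
  have hn1 : 0 < P.n1 := lt_of_lt_of_le (by norm_num) P.two_le_n1
  have hn2 : 0 < P.n2 := lt_of_lt_of_le (by norm_num) P.two_le_n2
  refine tensor_split_aux hn1 hn2 (Submodule.map (PBGAux.piL P) I.toSubmodule)
    (Submodule.map (PBGAux.piL P) J.toSubmodule) ?_ ?_ ?_ ?_ ?_
  · intro hbot
    apply hzI0
    have hm : PBGAux.piL P zI ∈ Submodule.map (PBGAux.piL P) I.toSubmodule :=
      Submodule.mem_map_of_mem ((LieSubmodule.mem_toSubmodule _).mpr hzI)
    rw [hbot] at hm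
    exact (Submodule.mem_bot ℂ).mp hm
  · intro hbot
    apply hzJ0
    have hm : PBGAux.piL P zJ ∈ Submodule.map (PBGAux.piL P) J.toSubmodule :=
      Submodule.mem_map_of_mem ((LieSubmodule.mem_toSubmodule _).mpr hzJ)
    rw [hbot] at hm
    exact (Submodule.mem_bot ℂ).mp hm
  · rw [← Submodule.map_sup, ← LieSubmodule.sup_toSubmodule, hsup,
      LieSubmodule.top_toSubmodule, Submodule.map_top, LinearMap.range_eq_top]
    exact PBGAux.piL_surjective P
  · rw [eq_bot_iff]
    rintro u ⟨huA, huB⟩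
    obtain ⟨z, hz, hzu⟩ := Submodule.mem_map.mp huA
    obtain ⟨w, hw, hwu⟩ := Submodule.mem_map.mp huB
    have hker : PBGAux.piL P (z - w) = 0 := by rw [map_sub, hzu, hwu, sub_self]
    have hder := PBGAux.mem_derived_of_piL_eq_zero P (z - w) hker
    have hsplit : (⁅(⊤ : LieIdeal ℂ L), (⊤ : LieIdeal ℂ L)⁆ : LieIdeal ℂ L)
        ≤ ⁅I, I⁆ ⊔ ⁅J, J⁆ := by
      conv_lhs => rw [← hsup]
      rw [LieSubmodule.sup_lie, LieSubmodule.lie_sup, LieSubmodule.lie_sup]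
      refine sup_le (sup_le le_sup_left ?_) (sup_le ?_ le_sup_right)
      · refine le_trans (LieSubmodule.lie_le_inf _ _) ?_
        rw [hinf]
        exact bot_le
      · refine le_trans (LieSubmodule.lie_le_inf _ _) ?_
        rw [inf_comm, hinf]
        exact bot_le
    have hmem : z - w ∈ (⁅I, I⁆ ⊔ ⁅J, J⁆ : LieIdeal ℂ L) :=
      hsplit ((LieSubmodule.mem_toSubmodule _).mp hder)
    obtain ⟨p, hp, q, hq, hpq⟩ := (LieSubmodule.mem_sup _ _ _).mp hmem
    have hzI' : z ∈ I := (LieSubmodule.mem_toSubmodule _).mp hz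
    have hwJ' : w ∈ J := (LieSubmodule.mem_toSubmodule _).mp hw
    have hzp : z - p ∈ I := sub_mem hzI' ((LieSubmodule.lie_le_left I I) hp)
    have hwq : w + q ∈ J := add_mem hwJ' ((LieSubmodule.lie_le_left J J) hq)
    have heq : z - p = w + q := by
      have hz' : z - w = p + q := hpq.symm
      have : z = p + q + w := by rw [← hz']; abel
      rw [this]; abel
    have hbotmem : z - p ∈ (⊥ : LieIdeal ℂ L) := by
      rw [← hinf]
      exact (LieSubmodule.mem_inf _ _ _).mpr ⟨hzp, heq ▸ hwq⟩
    have hz0 : z = p := by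
      have h0 := (LieSubmodule.mem_bot _).mp hbotmem
      rwa [sub_eq_zero] at h0
    rw [Submodule.mem_bot, ← hzu, hz0]
    exact PBGAux.piL_eq_zero_of_mem_lie P I I p hp
  · rintro a ha b hb i j
    obtain ⟨z, hz, hzu⟩ := Submodule.mem_map.mp ha
    obtain ⟨w, hw, hwu⟩ := Submodule.mem_map.mp hb
    have hzI' : z ∈ I := (LieSubmodule.mem_toSubmodule _).mp hz
    have hwJ' : w ∈ J := (LieSubmodule.mem_toSubmodule _).mp hw
    have hzw : ⁅z, w⁆ = 0 := by
      have h1 : ⁅z, w⁆ ∈ I := by rw [← lie_skew]; exact neg_mem (I.lie_mem hzI')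
      have h2 : ⁅z, w⁆ ∈ J := J.lie_mem hwJ'
      have hm : ⁅z, w⁆ ∈ I ⊓ J := (LieSubmodule.mem_inf _ _ _).mpr ⟨h1, h2⟩
      rw [hinf] at hm
      exact (LieSubmodule.mem_bot _).mp hm
    have h3 := PBGAux.rho3_bracket P z w
    rw [hzw, map_zero] at h3
    have h5 : P.Φ (PBGAux.rho1 P z) (PBGAux.rho2 P w)
        = P.Φ (PBGAux.rho1 P w) (PBGAux.rho2 P z) := by
      have h4 := h3.symm
      rwa [sub_eq_zero] at h4
    rw [PBGAux.Phi_apply P, PBGAux.Phi_apply P] at h5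
    have h6 := congrFun (congrFun h5 i) j
    rw [← hzu, ← hwu]
    simpa using h6
end
end

section
/- The product by generators is commutative: for finite-dimensional complex nilpotent Lie algebras g₁ and g₂, there is a Lie algebra isomorphism g₁ ×̲ g₂ ≅ g₂ ×̲ g₁. -/
open Module

noncomputable section

section MyAux

lemma my_aux_span_eq {g : Type*} [AddCommGroup g] [Module ℂ g] [FiniteDimensional ℂ g]
    {m n : ℕ} (b : Basis (Fin m) ℂ g) (D : Submodule ℂ g)
    (hgen : Submodule.span ℂ (⇑b '' {i : Fin m | (i : ℕ) < n}) ⊔ D = ⊤)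
    (hadp : D ≤ Submodule.span ℂ (⇑b '' {i : Fin m | n ≤ (i : ℕ)})) :
    Submodule.span ℂ (⇑b '' {i : Fin m | n ≤ (i : ℕ)}) = D := by
  set Sf := Submodule.span ℂ (⇑b '' {i : Fin m | (i : ℕ) < n}) with hSf
  set Sl := Submodule.span ℂ (⇑b '' {i : Fin m | n ≤ (i : ℕ)}) with hSl
  have hdisj : Disjoint Sf Sl := by
    apply b.linearIndependent.disjoint_span_image
    rw [Set.disjoint_left]
    intro i hi1 hi2
    simp only [Set.mem_setOf_eq] at hi1 hi2
    omega
  have hsup : Sf ⊔ Sl = ⊤ := by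
    rw [hSf, hSl, ← Submodule.span_union, ← Set.image_union]
    have : {i : Fin m | (i : ℕ) < n} ∪ {i : Fin m | n ≤ (i : ℕ)} = Set.univ := by
      ext i; simp [lt_or_ge]
    rw [this, Set.image_univ, Basis.span_eq]
  have h2 : finrank ℂ Sf + finrank ℂ Sl = finrank ℂ g := by
    have := Submodule.finrank_sup_add_finrank_inf_eq Sf Sl
    rw [hsup, hdisj.eq_bot, finrank_top, finrank_bot, add_zero] at this
    omega
  have h1 : finrank ℂ g ≤ finrank ℂ Sf + finrank ℂ D := by
    have := Submodule.finrank_sup_add_finrank_inf_eq Sf D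
    rw [hgen, finrank_top] at this
    omega
  exact (Submodule.eq_of_le_of_finrank_le hadp (by omega)).symm

namespace IsProductByGenerators

variable {L L' g1 g2 : Type*} [LieRing L] [LieAlgebra ℂ L] [LieRing L'] [LieAlgebra ℂ L']
  [LieRing g1] [LieAlgebra ℂ g1] [LieRing g2] [LieAlgebra ℂ g2]

lemma Phi_apply_zero (P : IsProductByGenerators L g1 g2) {x : g1}
    (hx : x ∈ Submodule.span ℂ (⇑P.b1 '' {i : Fin P.m1 | P.n1 ≤ (i : ℕ)})) :
    P.Φ x = 0 := by
  have hk : Submodule.span ℂ (⇑P.b1 '' {i : Fin P.m1 | P.n1 ≤ (i : ℕ)}) ≤ LinearMap.ker P.Φ := by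
    rw [Submodule.span_le]
    rintro _ ⟨i, hi, rfl⟩
    simp only [SetLike.mem_coe, LinearMap.mem_ker]
    apply P.b2.ext
    intro j
    rw [P.hΦ, dif_neg]
    · simp
    · simp only [Set.mem_setOf_eq] at hi
      omega
  exact hk hx

lemma Phi_flip_apply_zero (P : IsProductByGenerators L g1 g2) {y : g2}
    (hy : y ∈ Submodule.span ℂ (⇑P.b2 '' {j : Fin P.m2 | P.n2 ≤ (j : ℕ)})) :
    P.Φ.flip y = 0 := by
  have hk : Submodule.span ℂ (⇑P.b2 '' {j : Fin P.m2 | P.n2 ≤ (j : ℕ)}) ≤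
      LinearMap.ker P.Φ.flip := by
    rw [Submodule.span_le]
    rintro _ ⟨j, hj, rfl⟩
    simp only [SetLike.mem_coe, LinearMap.mem_ker]
    apply P.b1.ext
    intro i
    simp only [LinearMap.flip_apply, LinearMap.zero_apply]
    rw [P.hΦ, dif_neg]
    simp only [Set.mem_setOf_eq] at hj
    omega
  exact hk hy

lemma mem_derived1 (P : IsProductByGenerators L g1 g2) [FiniteDimensional ℂ g1]
    {i : Fin P.m1} (hi : P.n1 ≤ (i : ℕ)) :
    P.b1 i ∈ (LieAlgebra.derivedSeries ℂ g1 1).toSubmodule := by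
  rw [← my_aux_span_eq P.b1 _ P.gen1 P.adapted1]
  exact Submodule.subset_span ⟨i, hi, rfl⟩

lemma mem_derived2 (P : IsProductByGenerators L g1 g2) [FiniteDimensional ℂ g2]
    {j : Fin P.m2} (hj : P.n2 ≤ (j : ℕ)) :
    P.b2 j ∈ (LieAlgebra.derivedSeries ℂ g2 1).toSubmodule := by
  rw [← my_aux_span_eq P.b2 _ P.gen2 P.adapted2]
  exact Submodule.subset_span ⟨j, hj, rfl⟩

/-- The sign-twisted transpose map between the two centers. -/
def Tmap (P : IsProductByGenerators L g1 g2) (Q : IsProductByGenerators L' g2 g1) :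
    (Fin P.n1 → Fin P.n2 → ℂ) →ₗ[ℂ] (Fin Q.n1 → Fin Q.n2 → ℂ) where
  toFun v := ∑ i : Fin P.n1, ∑ j : Fin P.n2,
      v i j • (- Q.Φ (P.b2 (j.castLE P.n2_le)) (P.b1 (i.castLE P.n1_le)))
  map_add' v w := by
    simp only [Pi.add_apply, add_smul, Finset.sum_add_distrib]
  map_smul' c v := by
    simp only [Pi.smul_apply, smul_eq_mul, mul_smul, RingHom.id_apply, Finset.smul_sum]

lemma Tmap_single (P : IsProductByGenerators L g1 g2) (Q : IsProductByGenerators L' g2 g1)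
    (a : Fin P.n1) (b : Fin P.n2) :
    Tmap P Q (Pi.single a (Pi.single b (1 : ℂ))) =
      - Q.Φ (P.b2 (b.castLE P.n2_le)) (P.b1 (a.castLE P.n1_le)) := by
  simp only [Tmap, LinearMap.coe_mk, AddHom.coe_mk, Pi.single_apply]
  rw [Finset.sum_eq_single a]
  · rw [Finset.sum_eq_single b]
    · simp
    · intro j _ hj; simp [hj]
    · simp
  · intro i _ hi
    simp [hi]
  · simp

lemma Tmap_Phi (P : IsProductByGenerators L g1 g2) (Q : IsProductByGenerators L' g2 g1)
    [FiniteDimensional ℂ g1] [FiniteDimensional ℂ g2] (x : g1) (y : g2) :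
    Tmap P Q (P.Φ x y) = - Q.Φ y x := by
  have key : (P.Φ.compr₂ (Tmap P Q)) = -(Q.Φ.flip) := by
    apply P.b1.ext
    intro i
    apply P.b2.ext
    intro j
    simp only [LinearMap.compr₂_apply, LinearMap.neg_apply, LinearMap.flip_apply]
    rw [P.hΦ]
    by_cases h : (i : ℕ) < P.n1 ∧ (j : ℕ) < P.n2
    · rw [dif_pos h, Tmap_single]
      have h1 : P.b1 ((⟨(i : ℕ), h.1⟩ : Fin P.n1).castLE P.n1_le) = P.b1 i := by
        congr 1
      have h2 : P.b2 ((⟨(j : ℕ), h.2⟩ : Fin P.n2).castLE P.n2_le) = P.b2 j := by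
        congr 1
      rw [h1, h2]
    · rw [dif_neg h, map_zero]
      rcases not_and_or.mp h with hi | hj
      · have hx : P.b1 i ∈ Submodule.span ℂ (⇑Q.b2 '' {k : Fin Q.m2 | Q.n2 ≤ (k : ℕ)}) :=
          Q.adapted2 (P.mem_derived1 (not_lt.mp hi))
        have := Phi_flip_apply_zero Q hx
        have := LinearMap.congr_fun this (P.b2 j)
        simp only [LinearMap.flip_apply, LinearMap.zero_apply] at this
        rw [this, neg_zero]
      · have hy : P.b2 j ∈ Submodule.span ℂ (⇑Q.b1 '' {k : Fin Q.m1 | Q.n1 ≤ (k : ℕ)}) :=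
          Q.adapted1 (P.mem_derived2 (not_lt.mp hj))
        rw [Phi_apply_zero Q hy]
        simp
  have := LinearMap.congr_fun (LinearMap.congr_fun key x) y
  simpa using this

lemma single_eq_Phi (P : IsProductByGenerators L g1 g2) (i : Fin P.n1) (j : Fin P.n2) :
    P.Φ (P.b1 (i.castLE P.n1_le)) (P.b2 (j.castLE P.n2_le)) =
      Pi.single i (Pi.single j (1 : ℂ)) := by
  rw [P.hΦ, dif_pos ⟨i.isLt, j.isLt⟩]
  funext p q
  simp [Pi.single_apply, Fin.ext_iff]

lemma pi_decomp {a b : ℕ} (v : Fin a → Fin b → ℂ) :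
    v = ∑ i : Fin a, ∑ j : Fin b,
      v i j • (Pi.single i (Pi.single j (1 : ℂ)) : Fin a → Fin b → ℂ) := by
  funext p q
  simp only [Finset.sum_apply, Pi.smul_apply, Pi.single_apply, smul_eq_mul]
  rw [Finset.sum_eq_single p]
  · rw [Finset.sum_eq_single q] <;> simp +contextual [eq_comm]
  · intro i _ hi; simp [Ne.symm hi]
  · simp

lemma Tmap_Tmap_single (P : IsProductByGenerators L g1 g2) (Q : IsProductByGenerators L' g2 g1)
    [FiniteDimensional ℂ g1] [FiniteDimensional ℂ g2] (i : Fin P.n1) (j : Fin P.n2) :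
    Tmap Q P (Tmap P Q (Pi.single i (Pi.single j (1 : ℂ)))) =
      Pi.single i (Pi.single j (1 : ℂ)) := by
  rw [← single_eq_Phi P, Tmap_Phi P Q, map_neg, Tmap_Phi Q P, neg_neg, single_eq_Phi P]

lemma Tmap_Tmap (P : IsProductByGenerators L g1 g2) (Q : IsProductByGenerators L' g2 g1)
    [FiniteDimensional ℂ g1] [FiniteDimensional ℂ g2]
    (v : Fin P.n1 → Fin P.n2 → ℂ) : Tmap Q P (Tmap P Q v) = v := by
  conv_lhs => rw [pi_decomp v]
  simp only [map_sum, map_smul, Tmap_Tmap_single P Q]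
  exact (pi_decomp v).symm

/-- The swap linear equivalence. -/
def swapEquiv (P : IsProductByGenerators L g1 g2) (Q : IsProductByGenerators L' g2 g1)
    [FiniteDimensional ℂ g1] [FiniteDimensional ℂ g2] :
    (g1 × g2 × (Fin P.n1 → Fin P.n2 → ℂ)) ≃ₗ[ℂ] (g2 × g1 × (Fin Q.n1 → Fin Q.n2 → ℂ)) where
  toFun a := (a.2.1, a.1, Tmap P Q a.2.2)
  invFun a := (a.2.1, a.1, Tmap Q P a.2.2)
  map_add' a b := by simp [Prod.ext_iff]
  map_smul' c a := by simp [Prod.ext_iff]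
  left_inv a := by simp [Tmap_Tmap P Q]
  right_inv a := by simp [Tmap_Tmap Q P]

end IsProductByGenerators

end MyAux

/-- the product by generators is commutative: `g1 ×̲ g2 ≅ g2 ×̲ g1`. -/
theorem statement_3 (L L' g1 g2 : Type) [LieRing L] [LieAlgebra ℂ L]
    [LieRing L'] [LieAlgebra ℂ L']
    [LieRing g1] [LieAlgebra ℂ g1] [LieRing g2] [LieAlgebra ℂ g2]
    [FiniteDimensional ℂ g1] [FiniteDimensional ℂ g2]
    [LieRing.IsNilpotent g1] [LieRing.IsNilpotent g2]
    (P : IsProductByGenerators L g1 g2) (Q : IsProductByGenerators L' g2 g1) :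
    LieIso L L' := by
  classical
  let E : L ≃ₗ[ℂ] L' := P.e.symm.trans ((IsProductByGenerators.swapEquiv P Q).trans Q.e)
  have hE : ∀ a : g1 × g2 × (Fin P.n1 → Fin P.n2 → ℂ),
      E (P.e a) = Q.e (a.2.1, a.1, IsProductByGenerators.Tmap P Q a.2.2) := by
    intro a
    simp [E, IsProductByGenerators.swapEquiv]
  have hlie : ∀ z w : L, E ⁅z, w⁆ = ⁅E z, E w⁆ := by
    intro z w
    obtain ⟨a, rfl⟩ : ∃ a, P.e a = z := ⟨P.e.symm z, by simp⟩
    obtain ⟨b, rfl⟩ : ∃ b, P.e b = w := ⟨P.e.symm w, by simp⟩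
    rw [P.bracket_eq, hE, hE, hE, Q.bracket_eq]
    congr 1
    · congr 1
      rw [map_sub, IsProductByGenerators.Tmap_Phi P Q, IsProductByGenerators.Tmap_Phi P Q,
        neg_sub_neg]
  exact ⟨{ toFun := E, map_add' := E.map_add, map_smul' := E.map_smul,
           map_lie' := fun {x y} => hlie x y,
           invFun := E.symm, left_inv := E.left_inv, right_inv := E.right_inv }⟩
end
end

section
/- If a finite-dimensional complex nonabelian nilpotent Lie algebra g is a product by generators (i.e., g ≅ h₁ ×̲ h₂ for nonabelian nilpotent h₁, h₂), then dim Z(g) ≥ 6 and dim(g/[g,g]) ≥ 4. -/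
open Module

noncomputable section

section MyHelpers

variable {K A B : Type*} [Field K] [AddCommGroup A] [AddCommGroup B]
  [Module K A] [Module K B]

/-- auxiliary equivalence between a product submodule and the product of submodules -/
def myProdEquiv (p : Submodule K A) (q : Submodule K B) : ↥(p.prod q) ≃ₗ[K] ↥p × ↥q where
  toFun x := (⟨x.1.1, x.2.1⟩, ⟨x.1.2, x.2.2⟩)
  invFun y := ⟨(y.1.1, y.2.1), ⟨y.1.2, y.2.2⟩⟩
  left_inv x := rfl
  right_inv y := rfl
  map_add' x y := rfl
  map_smul' c x := rfl

lemma myFinrankProd [FiniteDimensional K A] [FiniteDimensional K B]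
    (p : Submodule K A) (q : Submodule K B) :
    Module.finrank K ↥(p.prod q) = Module.finrank K ↥p + Module.finrank K ↥q := by
  rw [LinearEquiv.finrank_eq (myProdEquiv p q), Module.finrank_prod]

lemma myDerivedOne (h : Type*) [LieRing h] [LieAlgebra ℂ h] :
    LieAlgebra.derivedSeries ℂ h 1 = ⁅(⊤ : LieIdeal ℂ h), (⊤ : LieIdeal ℂ h)⁆ := by
  rw [LieAlgebra.derivedSeries_def, LieAlgebra.derivedSeriesOfIdeal_succ,
    LieAlgebra.derivedSeriesOfIdeal_zero]

lemma myLieMemDerived {h : Type*} [LieRing h] [LieAlgebra ℂ h] (x y : h) :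
    ⁅x, y⁆ ∈ LieAlgebra.derivedSeries ℂ h 1 := by
  rw [myDerivedOne]
  exact LieSubmodule.lie_mem_lie (LieSubmodule.mem_top x) (LieSubmodule.mem_top y)

lemma myExistsCenterDerived (h : Type*) [LieRing h] [LieAlgebra ℂ h]
    [LieRing.IsNilpotent h] (hna : LieAlgebra.Nonabelian h) :
    ∃ z : h, z ≠ 0 ∧ z ∈ LieAlgebra.center ℂ h ∧ z ∈ LieAlgebra.derivedSeries ℂ h 1 := by
  obtain ⟨x, y, hxy⟩ := hna
  haveI : Nontrivial h := nontrivial_of_ne ⁅x, y⁆ 0 hxy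
  have hnt : ¬ LieModule.IsTrivial h h := fun ht => hxy (ht.trivial x y)
  haveI := LieModule.nontrivial_lowerCentralSeriesLast ℂ h h
  obtain ⟨z, hz⟩ := exists_ne (0 : LieModule.lowerCentralSeriesLast ℂ h h)
  refine ⟨z.1, fun h0 => hz (Subtype.ext h0),
    LieModule.lowerCentralSeriesLast_le_max_triv ℂ h h z.2, ?_⟩
  have hmem := LieModule.lowerCentralSeriesLast_le_of_not_isTrivial ℂ h h hnt z.2
  have heq : LieModule.lowerCentralSeries ℂ h h 1 = LieAlgebra.derivedSeries ℂ h 1 := by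
    rw [myDerivedOne]; rfl
  rwa [heq] at hmem

end MyHelpers

/-- if `g` is a product by generators (of nonabelian nilpotent algebras),
then `dim Z(g) ≥ 6` and `dim g/[g,g] ≥ 4`. -/
theorem statement_4 (g h1 h2 : Type) [LieRing g] [LieAlgebra ℂ g]
    [LieRing h1] [LieAlgebra ℂ h1] [LieRing h2] [LieAlgebra ℂ h2]
    [FiniteDimensional ℂ h1] [FiniteDimensional ℂ h2]
    [LieRing.IsNilpotent h1] [LieRing.IsNilpotent h2]
    [FiniteDimensional ℂ g] [LieRing.IsNilpotent g]
    (hna1 : LieAlgebra.Nonabelian h1) (hna2 : LieAlgebra.Nonabelian h2)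
    (P : IsProductByGenerators g h1 h2) :
    6 ≤ zdim g ∧ 4 ≤ gdim g := by
  classical
  obtain ⟨z1, hz1ne, hz1c, hz1d⟩ := myExistsCenterDerived h1 hna1
  obtain ⟨z2, hz2ne, hz2c, hz2d⟩ := myExistsCenterDerived h2 hna2
  set D1 : Submodule ℂ h1 := (LieAlgebra.derivedSeries ℂ h1 1).toSubmodule with hD1
  set D2 : Submodule ℂ h2 := (LieAlgebra.derivedSeries ℂ h2 1).toSubmodule with hD2
  set tail1 : Submodule ℂ h1 :=
    Submodule.span ℂ (⇑P.b1 '' {i : Fin P.m1 | P.n1 ≤ (i : ℕ)}) with htail1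
  set tail2 : Submodule ℂ h2 :=
    Submodule.span ℂ (⇑P.b2 '' {i : Fin P.m2 | P.n2 ≤ (i : ℕ)}) with htail2
  -- Φ vanishes on tails
  have hΦ1 : ∀ x ∈ tail1, P.Φ x = 0 := by
    have hk : tail1 ≤ LinearMap.ker P.Φ := by
      rw [htail1, Submodule.span_le]
      rintro _ ⟨i, hi, rfl⟩
      simp only [Set.mem_setOf_eq] at hi
      simp only [SetLike.mem_coe, LinearMap.mem_ker]
      refine P.b2.ext fun j => ?_
      rw [P.hΦ i j, dif_neg (by omega)]
      simp
    exact fun x hx => LinearMap.mem_ker.mp (hk hx)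
  have hΦ2 : ∀ y ∈ tail2, ∀ x : h1, P.Φ x y = 0 := by
    have hk : tail2 ≤ LinearMap.ker P.Φ.flip := by
      rw [htail2, Submodule.span_le]
      rintro _ ⟨j, hj, rfl⟩
      simp only [Set.mem_setOf_eq] at hj
      simp only [SetLike.mem_coe, LinearMap.mem_ker]
      refine P.b1.ext fun i => ?_
      rw [LinearMap.flip_apply, P.hΦ i j, dif_neg (by omega)]
      simp
    intro y hy x
    have h0 : P.Φ.flip y = 0 := LinearMap.mem_ker.mp (hk hy)
    rw [← LinearMap.flip_apply, h0, LinearMap.zero_apply]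
  have hnv4 : 4 ≤ Module.finrank ℂ (Fin P.n1 → Fin P.n2 → ℂ) := by
    have hv : Module.finrank ℂ (Fin P.n1 → Fin P.n2 → ℂ) = P.n1 * P.n2 := by
      rw [Module.finrank_pi_fintype ℂ]
      simp [Module.finrank_pi, Finset.sum_const, mul_comm]
    have := Nat.mul_le_mul P.two_le_n1 P.two_le_n2
    omega
  -- CENTER BOUND
  set Z1 : Submodule ℂ h1 := (LieAlgebra.center ℂ h1).toSubmodule ⊓ D1 with hZ1def
  set Z2 : Submodule ℂ h2 := (LieAlgebra.center ℂ h2).toSubmodule ⊓ D2 with hZ2def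
  set S : Submodule ℂ (h1 × h2 × (Fin P.n1 → Fin P.n2 → ℂ)) := Z1.prod (Z2.prod ⊤) with hSdef
  have hScentral : Submodule.map (P.e : (h1 × h2 × (Fin P.n1 → Fin P.n2 → ℂ)) →ₗ[ℂ] g) S ≤
      (LieAlgebra.center ℂ g).toSubmodule := by
    rintro _ ⟨⟨x, y, v⟩, hmem, rfl⟩
    rw [hSdef] at hmem
    obtain ⟨hx, hy, -⟩ := hmem
    show P.e (x, y, v) ∈ LieAlgebra.center ℂ g
    rw [LieModule.mem_maxTrivSubmodule]
    intro w
    have hw : w = P.e (P.e.symm w) := (P.e.apply_symm_apply w).symm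
    rw [hw, P.bracket_eq]
    have e1 : ⁅(P.e.symm w).1, x⁆ = 0 :=
      (LieModule.mem_maxTrivSubmodule ℂ h1 h1 x).mp hx.1 _
    have e2 : ⁅(P.e.symm w).2.1, y⁆ = 0 :=
      (LieModule.mem_maxTrivSubmodule ℂ h2 h2 y).mp hy.1 _
    have e3 : P.Φ (P.e.symm w).1 y = 0 := hΦ2 y (P.adapted2 hy.2) _
    have e4 : P.Φ x (P.e.symm w).2.1 = 0 := by
      rw [hΦ1 x (P.adapted1 hx.2), LinearMap.zero_apply]
    rw [e1, e2, e3, e4, sub_zero]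
    exact map_zero _
  have hZ1pos : 0 < Module.finrank ℂ Z1 := by
    haveI : Nontrivial Z1 :=
      nontrivial_of_ne ⟨z1, ⟨hz1c, hz1d⟩⟩ 0
        (fun hc => hz1ne (by simpa using congrArg Subtype.val hc))
    exact Module.finrank_pos
  have hZ2pos : 0 < Module.finrank ℂ Z2 := by
    haveI : Nontrivial Z2 :=
      nontrivial_of_ne ⟨z2, ⟨hz2c, hz2d⟩⟩ 0
        (fun hc => hz2ne (by simpa using congrArg Subtype.val hc))
    exact Module.finrank_pos
  have hfS : Module.finrank ℂ S =
      Module.finrank ℂ Z1 + (Module.finrank ℂ Z2 + Module.finrank ℂ (Fin P.n1 → Fin P.n2 → ℂ)) := by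
    rw [hSdef, myFinrankProd, myFinrankProd, finrank_top]
  have hcenter : 6 ≤ zdim g := by
    have h6 : 6 ≤ Module.finrank ℂ S := by rw [hfS]; omega
    have hmapeq : Module.finrank ℂ (Submodule.map (P.e : (h1 × h2 × (Fin P.n1 → Fin P.n2 → ℂ)) →ₗ[ℂ] g) S) =
        Module.finrank ℂ S := LinearEquiv.finrank_map_eq P.e S
    have hle := Submodule.finrank_mono hScentral
    show 6 ≤ Module.finrank ℂ (LieAlgebra.center ℂ g).toSubmodule
    omega
  refine ⟨hcenter, ?_⟩
  -- GENERATOR BOUND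
  set T : Submodule ℂ g :=
    Submodule.map (P.e : (h1 × h2 × (Fin P.n1 → Fin P.n2 → ℂ)) →ₗ[ℂ] g) (D1.prod (D2.prod ⊤)) with hTdef
  set Dg : Submodule ℂ g := (LieAlgebra.derivedSeries ℂ g 1).toSubmodule with hDg
  have hDgT : Dg ≤ T := by
    rw [hDg, myDerivedOne, LieSubmodule.lieIdeal_oper_eq_linear_span', Submodule.span_le]
    rintro m ⟨u, -, w, -, rfl⟩
    refine Submodule.mem_map.mpr ⟨(⁅(P.e.symm u).1, (P.e.symm w).1⁆,
      ⁅(P.e.symm u).2.1, (P.e.symm w).2.1⁆,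
      P.Φ (P.e.symm u).1 (P.e.symm w).2.1 - P.Φ (P.e.symm w).1 (P.e.symm u).2.1),
      ⟨myLieMemDerived _ _, myLieMemDerived _ _, trivial⟩, ?_⟩
    have hbr := P.bracket_eq (P.e.symm u) (P.e.symm w)
    rw [P.e.apply_symm_apply, P.e.apply_symm_apply] at hbr
    exact hbr.symm
  have hfT : Module.finrank ℂ T =
      Module.finrank ℂ D1 + (Module.finrank ℂ D2 + Module.finrank ℂ (Fin P.n1 → Fin P.n2 → ℂ)) := by
    rw [hTdef, LinearEquiv.finrank_map_eq, myFinrankProd, myFinrankProd, finrank_top]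
  have hfg : Module.finrank ℂ g =
      Module.finrank ℂ h1 + (Module.finrank ℂ h2 + Module.finrank ℂ (Fin P.n1 → Fin P.n2 → ℂ)) := by
    rw [← LinearEquiv.finrank_eq P.e, Module.finrank_prod, Module.finrank_prod]
  have hcard : ∀ (m n : ℕ), Fintype.card {i : Fin m // n ≤ (i : ℕ)} ≤ m - n := by
    intro m n
    have hinj : Function.Injective
        (fun i : {i : Fin m // n ≤ (i : ℕ)} => (⟨(i.1 : ℕ) - n, by
          have h1 : n ≤ (i.1 : ℕ) := i.2
          have h2 : (i.1 : ℕ) < m := i.1.isLt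
          omega⟩ : Fin (m - n))) := by
      intro i j hij
      have h1 : n ≤ (i.1 : ℕ) := i.2
      have h2 : n ≤ (j.1 : ℕ) := j.2
      rw [Fin.mk.injEq] at hij
      exact Subtype.ext (Fin.ext (by omega))
    simpa using Fintype.card_le_of_injective _ hinj
  have hd1 : Module.finrank ℂ D1 + P.n1 ≤ Module.finrank ℂ h1 := by
    have ha : Module.finrank ℂ D1 ≤ Module.finrank ℂ tail1 := Submodule.finrank_mono P.adapted1
    have hb : Module.finrank ℂ tail1 ≤ P.m1 - P.n1 := by
      rw [htail1, Set.image_eq_range]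
      exact (finrank_range_le_card _).trans (hcard _ _)
    have hc : Module.finrank ℂ h1 = P.m1 :=
      (Module.finrank_eq_card_basis P.b1).trans (Fintype.card_fin _)
    have := P.n1_le
    omega
  have hd2 : Module.finrank ℂ D2 + P.n2 ≤ Module.finrank ℂ h2 := by
    have ha : Module.finrank ℂ D2 ≤ Module.finrank ℂ tail2 := Submodule.finrank_mono P.adapted2
    have hb : Module.finrank ℂ tail2 ≤ P.m2 - P.n2 := by
      rw [htail2, Set.image_eq_range]
      exact (finrank_range_le_card _).trans (hcard _ _)
    have hc : Module.finrank ℂ h2 = P.m2 :=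
      (Module.finrank_eq_card_basis P.b2).trans (Fintype.card_fin _)
    have := P.n2_le
    omega
  have hq : Module.finrank ℂ (g ⧸ T) + Module.finrank ℂ T = Module.finrank ℂ g :=
    Submodule.finrank_quotient_add_finrank T
  have hsurj : Module.finrank ℂ (g ⧸ T) ≤ gdim g := by
    let φ : (g ⧸ Dg) →ₗ[ℂ] (g ⧸ T) :=
      Submodule.mapQ Dg T LinearMap.id (fun x hx => hDgT hx)
    have hs : Function.Surjective φ := by
      intro x
      obtain ⟨y, rfl⟩ := Submodule.Quotient.mk_surjective T x
      exact ⟨Submodule.Quotient.mk y, rfl⟩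
    have h1' : Module.finrank ℂ (LinearMap.range φ) ≤ Module.finrank ℂ (g ⧸ Dg) :=
      LinearMap.finrank_range_le φ
    rw [LinearMap.range_eq_top.mpr hs, finrank_top] at h1'
    exact h1'
  have := P.two_le_n1
  have := P.two_le_n2
  have h4 : 4 ≤ Module.finrank ℂ (g ⧸ T) := by omega
  omega
end
end

section
/- No filiform Lie algebra is a product by generators. -/
open Module

noncomputable section

section AuxStatement5

open LieModule

variable {R L : Type*} [CommRing R] [LieRing L] [LieAlgebra R L]

lemma aux_lcs_stab (k : ℕ)
    (h : lowerCentralSeries R L L (k + 1) = lowerCentralSeries R L L k) :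
    ∀ l, lowerCentralSeries R L L (k + l) = lowerCentralSeries R L L k := by
  intro l
  induction l with
  | zero => rfl
  | succ l ih =>
      rw [← Nat.add_assoc, lowerCentralSeries_succ, ih, ← lowerCentralSeries_succ, h]

lemma aux_lcs_strict [LieRing.IsNilpotent L] (k : ℕ)
    (h : lowerCentralSeries R L L k ≠ ⊥) :
    lowerCentralSeries R L L (k + 1) < lowerCentralSeries R L L k := by
  rcases lt_or_eq_of_le (antitone_lowerCentralSeries R L L (Nat.le_succ k)) with hlt | heq
  · exact hlt
  · exfalso
    apply h
    obtain ⟨m, hm⟩ := (LieModule.isNilpotent_iff R L L).mp inferInstance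
    have h1 := aux_lcs_stab (R := R) (L := L) k heq m
    have h2 : lowerCentralSeries R L L (k + m) ≤ lowerCentralSeries R L L m :=
      antitone_lowerCentralSeries R L L (Nat.le_add_left m k)
    rw [h1, hm] at *
    exact le_bot_iff.mp (h1 ▸ h2)

lemma aux_derived_one_eq_lcs :
    LieAlgebra.derivedSeries R L 1 = lowerCentralSeries R L L 1 := by
  rw [LieAlgebra.derivedSeries_def, LieAlgebra.derivedSeriesOfIdeal_succ,
    LieAlgebra.derivedSeriesOfIdeal_zero, lowerCentralSeries_succ, lowerCentralSeries_zero]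

end AuxStatement5

/-- no filiform Lie algebra (nilpotency index = dim − 1) is a product by
generators. -/
theorem statement_5 (g : Type) [LieRing g] [LieAlgebra ℂ g]
    [FiniteDimensional ℂ g] [LieRing.IsNilpotent g]
    (hfiliform : nilindex g + 1 = finrank ℂ g) :
    ∀ (h1 h2 : Type) [LieRing h1] [LieAlgebra ℂ h1] [LieRing h2] [LieAlgebra ℂ h2]
      [FiniteDimensional ℂ h1] [FiniteDimensional ℂ h2]
      [LieRing.IsNilpotent h1] [LieRing.IsNilpotent h2],
      LieAlgebra.Nonabelian h1 → LieAlgebra.Nonabelian h2 →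
      IsProductByGenerators g h1 h2 → False := by
  intro h1 h2 _ _ _ _ _ _ _ _ _ _ P
  classical
  -- notation
  set D1 : Submodule ℂ h1 := (LieAlgebra.derivedSeries ℂ h1 1).toSubmodule with hD1
  set D2 : Submodule ℂ h2 := (LieAlgebra.derivedSeries ℂ h2 1).toSubmodule with hD2
  -- the linear map g → (h1 ⧸ D1) × (h2 ⧸ D2)
  let f1 : g →ₗ[ℂ] h1 ⧸ D1 :=
    D1.mkQ ∘ₗ (LinearMap.fst ℂ h1 (h2 × (Fin P.n1 → Fin P.n2 → ℂ))) ∘ₗ P.e.symm.toLinearMap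
  let f2 : g →ₗ[ℂ] h2 ⧸ D2 :=
    D2.mkQ ∘ₗ (LinearMap.fst ℂ h2 (Fin P.n1 → Fin P.n2 → ℂ)) ∘ₗ
      (LinearMap.snd ℂ h1 (h2 × (Fin P.n1 → Fin P.n2 → ℂ))) ∘ₗ P.e.symm.toLinearMap
  let f : g →ₗ[ℂ] (h1 ⧸ D1) × (h2 ⧸ D2) := LinearMap.prod f1 f2
  have hfe : ∀ a : h1 × h2 × (Fin P.n1 → Fin P.n2 → ℂ),
      f (P.e a) = (D1.mkQ a.1, D2.mkQ a.2.1) := by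
    intro a
    simp [f, f1, f2]
  -- f is surjective
  have hfsurj : Function.Surjective f := by
    rintro ⟨u, v⟩
    obtain ⟨x, rfl⟩ := D1.mkQ_surjective u
    obtain ⟨y, rfl⟩ := D2.mkQ_surjective v
    exact ⟨P.e (x, y, 0), hfe (x, y, 0)⟩
  -- derived subalgebra of g is inside ker f
  have hker : (LieAlgebra.derivedSeries ℂ g 1).toSubmodule ≤ LinearMap.ker f := by
    rw [LieAlgebra.derivedSeries_def, LieAlgebra.derivedSeriesOfIdeal_succ,
      LieAlgebra.derivedSeriesOfIdeal_zero, LieSubmodule.lieIdeal_oper_eq_linear_span']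
    rw [Submodule.span_le]
    rintro _ ⟨x, -, y, -, rfl⟩
    have hx : x = P.e (P.e.symm x) := (P.e.apply_symm_apply x).symm
    have hy : y = P.e (P.e.symm y) := (P.e.apply_symm_apply y).symm
    rw [SetLike.mem_coe, LinearMap.mem_ker, hx, hy, P.bracket_eq, hfe]
    have hm1 : ⁅(P.e.symm x).1, (P.e.symm y).1⁆ ∈ D1 := by
      rw [hD1, LieAlgebra.derivedSeries_def, LieAlgebra.derivedSeriesOfIdeal_succ,
        LieAlgebra.derivedSeriesOfIdeal_zero]
      exact LieSubmodule.lie_mem_lie (LieSubmodule.mem_top _) (LieSubmodule.mem_top _)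
    have hm2 : ⁅(P.e.symm x).2.1, (P.e.symm y).2.1⁆ ∈ D2 := by
      rw [hD2, LieAlgebra.derivedSeries_def, LieAlgebra.derivedSeriesOfIdeal_succ,
        LieAlgebra.derivedSeriesOfIdeal_zero]
      exact LieSubmodule.lie_mem_lie (LieSubmodule.mem_top _) (LieSubmodule.mem_top _)
    simp only [Prod.mk_eq_zero, Submodule.mkQ_apply, Submodule.Quotient.mk_eq_zero]
    exact ⟨hm1, hm2⟩
  -- the quotients have dimension ≥ n1, n2
  have hq1 : P.n1 ≤ finrank ℂ (h1 ⧸ D1) := by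
    have hli : LinearIndependent ℂ (⇑P.b1 ∘ Fin.castLE P.n1_le) :=
      P.b1.linearIndependent.comp _ (Fin.castLE_injective P.n1_le)
    have hdisj : Disjoint (Submodule.span ℂ (Set.range (⇑P.b1 ∘ Fin.castLE P.n1_le)))
        (LinearMap.ker D1.mkQ) := by
      rw [D1.ker_mkQ]
      have h1le : Submodule.span ℂ (Set.range (⇑P.b1 ∘ Fin.castLE P.n1_le)) ≤
          Submodule.span ℂ (⇑P.b1 '' {i : Fin P.m1 | (i : ℕ) < P.n1}) := by
        apply Submodule.span_mono
        rintro _ ⟨j, rfl⟩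
        exact ⟨Fin.castLE P.n1_le j, j.2, rfl⟩
      have h2le : D1 ≤ Submodule.span ℂ (⇑P.b1 '' {i : Fin P.m1 | P.n1 ≤ (i : ℕ)}) :=
        P.adapted1
      refine Disjoint.mono h1le h2le ?_
      apply P.b1.linearIndependent.disjoint_span_image
      rw [Set.disjoint_left]
      intro i hi hi'
      simp only [Set.mem_setOf_eq] at hi hi'
      omega
    have := (hli.map hdisj).fintype_card_le_finrank
    simpa using this
  have hq2 : P.n2 ≤ finrank ℂ (h2 ⧸ D2) := by
    have hli : LinearIndependent ℂ (⇑P.b2 ∘ Fin.castLE P.n2_le) :=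
      P.b2.linearIndependent.comp _ (Fin.castLE_injective P.n2_le)
    have hdisj : Disjoint (Submodule.span ℂ (Set.range (⇑P.b2 ∘ Fin.castLE P.n2_le)))
        (LinearMap.ker D2.mkQ) := by
      rw [D2.ker_mkQ]
      have h1le : Submodule.span ℂ (Set.range (⇑P.b2 ∘ Fin.castLE P.n2_le)) ≤
          Submodule.span ℂ (⇑P.b2 '' {i : Fin P.m2 | (i : ℕ) < P.n2}) := by
        apply Submodule.span_mono
        rintro _ ⟨j, rfl⟩
        exact ⟨Fin.castLE P.n2_le j, j.2, rfl⟩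
      have h2le : D2 ≤ Submodule.span ℂ (⇑P.b2 '' {i : Fin P.m2 | P.n2 ≤ (i : ℕ)}) :=
        P.adapted2
      refine Disjoint.mono h1le h2le ?_
      apply P.b2.linearIndependent.disjoint_span_image
      rw [Set.disjoint_left]
      intro i hi hi'
      simp only [Set.mem_setOf_eq] at hi hi'
      omega
    have := (hli.map hdisj).fintype_card_le_finrank
    simpa using this
  -- rank-nullity for f
  have hrn : finrank ℂ (LinearMap.range f) + finrank ℂ (LinearMap.ker f) = finrank ℂ g :=
    LinearMap.finrank_range_add_finrank_ker f
  have hrange : finrank ℂ (LinearMap.range f) = finrank ℂ ((h1 ⧸ D1) × (h2 ⧸ D2)) := by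
    rw [LinearMap.range_eq_top.mpr hfsurj, finrank_top]
  have hprod : finrank ℂ ((h1 ⧸ D1) × (h2 ⧸ D2)) =
      finrank ℂ (h1 ⧸ D1) + finrank ℂ (h2 ⧸ D2) := Module.finrank_prod
  have hDker : finrank ℂ (LieAlgebra.derivedSeries ℂ g 1).toSubmodule ≤
      finrank ℂ (LinearMap.ker f) := Submodule.finrank_mono hker
  -- so finrank g ≥ 4 + finrank derived
  have hn4 : 4 + finrank ℂ (LieAlgebra.derivedSeries ℂ g 1).toSubmodule ≤ finrank ℂ g := by
    have h4 : 4 ≤ finrank ℂ (LinearMap.range f) := by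
      rw [hrange, hprod]
      have := P.two_le_n1
      have := P.two_le_n2
      omega
    omega
  -- part 1: filiform gives finrank derived ≥ finrank g - 2
  set N := nilindex g with hN
  have hSne : {k | LieModule.lowerCentralSeries ℂ g g k = ⊥}.Nonempty :=
    (LieModule.isNilpotent_iff ℂ g g).mp inferInstance
  have hlow : ∀ k < N, LieModule.lowerCentralSeries ℂ g g k ≠ ⊥ := fun k hk =>
    Nat.notMem_of_lt_sInf hk
  have key : ∀ d j, j + d ≤ N →
      d ≤ finrank ℂ (LieModule.lowerCentralSeries ℂ g g j).toSubmodule := by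
    intro d
    induction d with
    | zero => intro j _; exact Nat.zero_le _
    | succ d ih =>
        intro j hj
        have hjN : j < N := by omega
        have hstrict := aux_lcs_strict (R := ℂ) (L := g) j (hlow j hjN)
        have hsub : (LieModule.lowerCentralSeries ℂ g g (j + 1)).toSubmodule <
            (LieModule.lowerCentralSeries ℂ g g j).toSubmodule := by
          refine lt_of_le_of_ne ?_ ?_
          · exact (LieSubmodule.toSubmodule_le_toSubmodule _ _).mpr hstrict.le
          · intro hcontra
            exact hstrict.ne ((LieSubmodule.toSubmodule_inj _ _).mp hcontra)
        have hfin := Submodule.finrank_lt_finrank_of_lt hsub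
        have := ih (j + 1) (by omega)
        omega
  have hNge : 3 ≤ N := by omega
  have hd1 : N - 1 ≤ finrank ℂ (LieModule.lowerCentralSeries ℂ g g 1).toSubmodule :=
    key (N - 1) 1 (by omega)
  have hder : finrank ℂ (LieAlgebra.derivedSeries ℂ g 1).toSubmodule =
      finrank ℂ (LieModule.lowerCentralSeries ℂ g g 1).toSubmodule := by
    rw [aux_derived_one_eq_lcs]
  -- also finrank derived ≤ finrank g
  omega
end
end

section
/- Let D be a derivation of g₁ ×̲ g₂ and write D_{ij} = pᵢ ∘ D ∘ pⱼ where pᵢ is the projection onto the i-th component of the vector space decomposition g₁ ×̲ g₂ = g₁ ⊕ g₂ ⊕ g₃ (g₃ being the adjoined center). Then D₁₁ restricted to g₁ is a derivation of g₁ and D₂₂ restricted to g₂ is a derivation of g₂. -/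
open Module

noncomputable section

/-- for a derivation `D` of `g1 ×̲ g2`, `D₁₁` restricted to `g1` is a
derivation of `g1` and `D₂₂` restricted to `g2` is a derivation of `g2`. -/
theorem statement_8 (L g1 g2 : Type) [LieRing L] [LieAlgebra ℂ L]
    [LieRing g1] [LieAlgebra ℂ g1] [LieRing g2] [LieAlgebra ℂ g2]
    [FiniteDimensional ℂ g1] [FiniteDimensional ℂ g2]
    [LieRing.IsNilpotent g1] [LieRing.IsNilpotent g2]
    (P : IsProductByGenerators L g1 g2)
    (D : L →ₗ[ℂ] L) (hD : IsDerivation D) :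
    (∀ x y : g1, P.D11 D ⁅x, y⁆ = ⁅P.D11 D x, y⁆ + ⁅x, P.D11 D y⁆) ∧
    (∀ x y : g2, P.D22 D ⁅x, y⁆ = ⁅P.D22 D x, y⁆ + ⁅x, P.D22 D y⁆) := by
  have hp1add : ∀ z w : L, P.p₁ (z + w) = P.p₁ z + P.p₁ w := by
    intro z w; simp [IsProductByGenerators.p₁, map_add]
  have hp2add : ∀ z w : L, P.p₂ (z + w) = P.p₂ z + P.p₂ w := by
    intro z w; simp [IsProductByGenerators.p₂, map_add]
  have hlie1 : ∀ (z : L) (y : g1), P.p₁ ⁅z, P.ι₁ y⁆ = ⁅P.p₁ z, y⁆ := by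
    intro z y
    have hz : z = P.e (P.e.symm z) := (P.e.apply_symm_apply z).symm
    rw [IsProductByGenerators.p₁, IsProductByGenerators.ι₁, hz,
      P.bracket_eq (P.e.symm z) (y, 0, 0)]
    simp
    rfl
  have hlie1' : ∀ (y : g1) (z : L), P.p₁ ⁅P.ι₁ y, z⁆ = ⁅y, P.p₁ z⁆ := by
    intro y z
    have hz : z = P.e (P.e.symm z) := (P.e.apply_symm_apply z).symm
    rw [IsProductByGenerators.p₁, IsProductByGenerators.ι₁, hz,
      P.bracket_eq (y, 0, 0) (P.e.symm z)]
    simp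
    rfl
  have hlie2 : ∀ (z : L) (y : g2), P.p₂ ⁅z, P.ι₂ y⁆ = ⁅P.p₂ z, y⁆ := by
    intro z y
    have hz : z = P.e (P.e.symm z) := (P.e.apply_symm_apply z).symm
    rw [IsProductByGenerators.p₂, IsProductByGenerators.ι₂, hz,
      P.bracket_eq (P.e.symm z) (0, y, 0)]
    simp
    rfl
  have hlie2' : ∀ (y : g2) (z : L), P.p₂ ⁅P.ι₂ y, z⁆ = ⁅y, P.p₂ z⁆ := by
    intro y z
    have hz : z = P.e (P.e.symm z) := (P.e.apply_symm_apply z).symm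
    rw [IsProductByGenerators.p₂, IsProductByGenerators.ι₂, hz,
      P.bracket_eq (0, y, 0) (P.e.symm z)]
    simp
    rfl
  have hb1 : ∀ x y : g1, ⁅P.ι₁ x, P.ι₁ y⁆ = P.ι₁ ⁅x, y⁆ := by
    intro x y
    rw [IsProductByGenerators.ι₁, IsProductByGenerators.ι₁, IsProductByGenerators.ι₁,
      P.bracket_eq (x, 0, 0) (y, 0, 0)]
    simp
  have hb2 : ∀ x y : g2, ⁅P.ι₂ x, P.ι₂ y⁆ = P.ι₂ ⁅x, y⁆ := by
    intro x y
    rw [IsProductByGenerators.ι₂, IsProductByGenerators.ι₂, IsProductByGenerators.ι₂,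
      P.bracket_eq (0, x, 0) (0, y, 0)]
    simp
  constructor
  · intro x y
    have h := hD (P.ι₁ x) (P.ι₁ y)
    rw [hb1] at h
    show P.p₁ (D (P.ι₁ ⁅x, y⁆)) = _
    rw [h, hp1add, hlie1, hlie1']; rfl
  · intro x y
    have h := hD (P.ι₂ x) (P.ι₂ y)
    rw [hb2] at h
    show P.p₂ (D (P.ι₂ ⁅x, y⁆)) = _
    rw [h, hp2add, hlie2, hlie2']; rfl
end
end

section
/- Let D be a derivation of g₁ ×̲ g₂ with components D_{ij} = pᵢ ∘ D ∘ pⱼ. Then D₂₁([g₁,g₁]) = 0 and D₁₂([g₂,g₂]) = 0. -/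
open Module

noncomputable section

/-- for a derivation `D` of `g1 ×̲ g2`, `D₂₁([g1,g1]) = 0` and
`D₁₂([g2,g2]) = 0`. -/
theorem statement_9 (L g1 g2 : Type) [LieRing L] [LieAlgebra ℂ L]
    [LieRing g1] [LieAlgebra ℂ g1] [LieRing g2] [LieAlgebra ℂ g2]
    [FiniteDimensional ℂ g1] [FiniteDimensional ℂ g2]
    [LieRing.IsNilpotent g1] [LieRing.IsNilpotent g2]
    (P : IsProductByGenerators L g1 g2)
    (D : L →ₗ[ℂ] L) (hD : IsDerivation D) :
    (∀ c ∈ LieAlgebra.derivedSeries ℂ g1 1, P.D21 D c = 0) ∧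
    (∀ c ∈ LieAlgebra.derivedSeries ℂ g2 1, P.D12 D c = 0) := by
  classical
  -- linear versions of the inclusions and projections
  let V := Fin P.n1 → Fin P.n2 → ℂ
  let j1 : g1 →ₗ[ℂ] L := P.e.toLinearMap ∘ₗ LinearMap.prod LinearMap.id (0 : g1 →ₗ[ℂ] g2 × V)
  let j2 : g2 →ₗ[ℂ] L := P.e.toLinearMap ∘ₗ
    (LinearMap.prod (0 : g2 →ₗ[ℂ] g1) (LinearMap.prod LinearMap.id (0 : g2 →ₗ[ℂ] V)))
  let q1 : L →ₗ[ℂ] g1 := LinearMap.fst ℂ g1 (g2 × V) ∘ₗ P.e.symm.toLinearMap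
  let q2 : L →ₗ[ℂ] g2 :=
    LinearMap.fst ℂ g2 V ∘ₗ LinearMap.snd ℂ g1 (g2 × V) ∘ₗ P.e.symm.toLinearMap
  have hj1 : ∀ x : g1, j1 x = P.ι₁ x := fun x => rfl
  have hj2 : ∀ y : g2, j2 y = P.ι₂ y := fun y => rfl
  have hq1 : ∀ z : L, q1 z = P.p₁ z := fun z => rfl
  have hq2 : ∀ z : L, q2 z = P.p₂ z := fun z => rfl
  -- the g2-component of any bracket with an ι₁ element vanishes, and symmetrically
  have hb2 : ∀ (z : L) (y : g1), q2 ⁅z, P.ι₁ y⁆ = 0 := by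
    intro z y
    show (P.e.symm ⁅z, P.e (y, 0, 0)⁆).2.1 = 0
    rw [← P.e.apply_symm_apply z, P.bracket_eq]
    simp
  have hb2' : ∀ (x : g1) (z : L), q2 ⁅P.ι₁ x, z⁆ = 0 := by
    intro x z
    show (P.e.symm ⁅P.e (x, 0, 0), z⁆).2.1 = 0
    rw [← P.e.apply_symm_apply z, P.bracket_eq]
    simp
  have hb1 : ∀ (z : L) (y : g2), q1 ⁅z, P.ι₂ y⁆ = 0 := by
    intro z y
    show (P.e.symm ⁅z, P.e (0, y, 0)⁆).1 = 0
    rw [← P.e.apply_symm_apply z, P.bracket_eq]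
    simp
  have hb1' : ∀ (x : g2) (z : L), q1 ⁅P.ι₂ x, z⁆ = 0 := by
    intro x z
    show (P.e.symm ⁅P.e (0, x, 0), z⁆).1 = 0
    rw [← P.e.apply_symm_apply z, P.bracket_eq]
    simp
  -- ι₁ and ι₂ intertwine brackets
  have hι1 : ∀ x y : g1, P.ι₁ ⁅x, y⁆ = ⁅P.ι₁ x, P.ι₁ y⁆ := by
    intro x y
    have := P.bracket_eq (x, 0, 0) (y, 0, 0)
    simp only [IsProductByGenerators.ι₁]
    rw [this]; simp
  have hι2 : ∀ x y : g2, P.ι₂ ⁅x, y⁆ = ⁅P.ι₂ x, P.ι₂ y⁆ := by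
    intro x y
    have := P.bracket_eq (0, x, 0) (0, y, 0)
    simp only [IsProductByGenerators.ι₂]
    rw [this]; simp
  -- D21 and D12 as linear maps
  let F1 : g1 →ₗ[ℂ] g2 := q2 ∘ₗ D ∘ₗ j1
  let F2 : g2 →ₗ[ℂ] g1 := q1 ∘ₗ D ∘ₗ j2
  have hF1 : ∀ x : g1, F1 x = P.D21 D x := fun x => rfl
  have hF2 : ∀ y : g2, F2 y = P.D12 D y := fun y => rfl
  have hF1b : ∀ x y : g1, F1 ⁅x, y⁆ = 0 := by
    intro x y
    have : F1 ⁅x, y⁆ = q2 (D ⁅P.ι₁ x, P.ι₁ y⁆) := by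
      simp [F1, hj1, hι1]
    rw [this, hD, map_add, hb2, hb2', add_zero]
  have hF2b : ∀ x y : g2, F2 ⁅x, y⁆ = 0 := by
    intro x y
    have : F2 ⁅x, y⁆ = q1 (D ⁅P.ι₂ x, P.ι₂ y⁆) := by
      simp [F2, hj2, hι2]
    rw [this, hD, map_add, hb1, hb1' x (D (P.ι₂ y)), add_zero]
  -- derived series is spanned by brackets
  have hds : ∀ (g : Type) (_ : LieRing g) (_ : LieAlgebra ℂ g),
      ((LieAlgebra.derivedSeries ℂ g 1 : LieIdeal ℂ g) : Submodule ℂ g) =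
        Submodule.span ℂ {m : g | ∃ x ∈ (⊤ : LieIdeal ℂ g), ∃ n ∈ (⊤ : LieIdeal ℂ g), ⁅x, n⁆ = m} := by
    intro g _ _
    rw [show LieAlgebra.derivedSeries ℂ g 1 = ⁅(⊤ : LieIdeal ℂ g), (⊤ : LieIdeal ℂ g)⁆ from rfl]
    exact LieSubmodule.lieIdeal_oper_eq_linear_span' ..
  constructor
  · intro c hc
    rw [← hF1]
    have hc' : c ∈ ((LieAlgebra.derivedSeries ℂ g1 1 : LieIdeal ℂ g1) : Submodule ℂ g1) := hc
    rw [hds g1 _ _] at hc'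
    clear hc
    induction hc' using Submodule.span_induction with
    | mem x hx => obtain ⟨a, -, b, -, rfl⟩ := hx; exact hF1b a b
    | zero => simp
    | add x y _ _ hx hy => simp [hx, hy]
    | smul t x _ hx => simp [hx]
  · intro c hc
    rw [← hF2]
    have hc' : c ∈ ((LieAlgebra.derivedSeries ℂ g2 1 : LieIdeal ℂ g2) : Submodule ℂ g2) := hc
    rw [hds g2 _ _] at hc'
    clear hc
    induction hc' using Submodule.span_induction with
    | mem x hx => obtain ⟨a, -, b, -, rfl⟩ := hx; exact hF2b a b
    | zero => simp
    | add x y _ _ hx hy => simp [hx, hy]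
    | smul t x _ hx => simp [hx]
end
end

section
/- Let D be a derivation of g₁ ×̲ g₂ with components D_{ij} = pᵢ ∘ D ∘ pⱼ. Then D₁₃(g₃) ⊂ Z(g₁) and D₂₃(g₃) ⊂ Z(g₂), where Z(gᵢ) is the center of gᵢ. -/
open Module

noncomputable section

/-- for a derivation `D` of `g1 ×̲ g2`, `D₁₃(g3) ⊆ Z(g1)` and
`D₂₃(g3) ⊆ Z(g2)`. -/
theorem statement_10 (L g1 g2 : Type) [LieRing L] [LieAlgebra ℂ L]
    [LieRing g1] [LieAlgebra ℂ g1] [LieRing g2] [LieAlgebra ℂ g2]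
    [FiniteDimensional ℂ g1] [FiniteDimensional ℂ g2]
    [LieRing.IsNilpotent g1] [LieRing.IsNilpotent g2]
    (P : IsProductByGenerators L g1 g2)
    (D : L →ₗ[ℂ] L) (hD : IsDerivation D) :
    (∀ v : Fin P.n1 → Fin P.n2 → ℂ, P.D13 D v ∈ LieAlgebra.center ℂ g1) ∧
    (∀ v : Fin P.n1 → Fin P.n2 → ℂ, P.D23 D v ∈ LieAlgebra.center ℂ g2) := by
  have hcent : ∀ (v : Fin P.n1 → Fin P.n2 → ℂ) (z : L), ⁅P.ι₃ v, z⁆ = 0 := by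
    intro v z
    have h := P.bracket_eq (0, 0, v) (P.e.symm z)
    simp only [IsProductByGenerators.ι₃, LinearEquiv.apply_symm_apply] at h ⊢
    simpa [Prod.mk_zero_zero] using h
  have hDc : ∀ (v : Fin P.n1 → Fin P.n2 → ℂ) (z : L), ⁅D (P.ι₃ v), z⁆ = 0 := by
    intro v z
    have h := hD (P.ι₃ v) z
    rw [hcent v z, map_zero, hcent] at h
    simpa using h.symm
  constructor
  · intro v
    rw [LieModule.mem_maxTrivSubmodule]
    intro x'
    have h0 := hDc v (P.ι₁ x')
    set a := P.e.symm (D (P.ι₃ v)) with ha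
    have hDa : D (P.ι₃ v) = P.e a := by rw [ha, LinearEquiv.apply_symm_apply]
    have h := P.bracket_eq a (x', 0, 0)
    rw [← hDa] at h
    simp only [IsProductByGenerators.ι₁] at h0
    rw [h0] at h
    have h2 := congrArg P.e.symm h
    rw [LinearEquiv.symm_apply_apply, map_zero] at h2
    have h3 : ⁅a.1, x'⁆ = 0 := (congrArg Prod.fst h2).symm
    have : P.D13 D v = a.1 := rfl
    rw [this, ← lie_skew, h3, neg_zero]
  · intro v
    rw [LieModule.mem_maxTrivSubmodule]
    intro y'
    have h0 := hDc v (P.ι₂ y')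
    set a := P.e.symm (D (P.ι₃ v)) with ha
    have hDa : D (P.ι₃ v) = P.e a := by rw [ha, LinearEquiv.apply_symm_apply]
    have h := P.bracket_eq a (0, y', 0)
    rw [← hDa] at h
    simp only [IsProductByGenerators.ι₂] at h0
    rw [h0] at h
    have h2 := congrArg P.e.symm h
    rw [LinearEquiv.symm_apply_apply, map_zero] at h2
    have h3 : ⁅a.2.1, y'⁆ = 0 := (congrArg (fun p => p.2.1) h2).symm
    have : P.D23 D v = a.2.1 := rfl
    rw [this, ← lie_skew, h3, neg_zero]
end
end

section
/- Let D be a derivation of g₁ ×̲ g₂ with components D_{ij} = pᵢ ∘ D ∘ pⱼ. Then D₁₂(g₂) ⊂ T₁ and D₂₁(g₁) ⊂ T₂, where Tᵢ = {Y ∈ gᵢ : [Y, gᵢ] ⊂ Z(gᵢ)} is the transporter of gᵢ into its center. -/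
open Module

noncomputable section

/-- for a derivation `D` of `g1 ×̲ g2`, `D₁₂(g2) ⊆ T₁` and `D₂₁(g1) ⊆ T₂`,
where `Tᵢ = {Y ∈ gᵢ | [Y, gᵢ] ⊆ Z(gᵢ)}`. -/
theorem statement_11 (L g1 g2 : Type) [LieRing L] [LieAlgebra ℂ L]
    [LieRing g1] [LieAlgebra ℂ g1] [LieRing g2] [LieAlgebra ℂ g2]
    [FiniteDimensional ℂ g1] [FiniteDimensional ℂ g2]
    [LieRing.IsNilpotent g1] [LieRing.IsNilpotent g2]
    (P : IsProductByGenerators L g1 g2)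
    (D : L →ₗ[ℂ] L) (hD : IsDerivation D) :
    (∀ y : g2, ∀ a : g1, ⁅P.D12 D y, a⁆ ∈ LieAlgebra.center ℂ g1) ∧
    (∀ x : g1, ∀ b : g2, ⁅P.D21 D x, b⁆ ∈ LieAlgebra.center ℂ g2) := by
  classical
  have hp1 : ∀ z z' : L, P.p₁ ⁅z, z'⁆ = ⁅P.p₁ z, P.p₁ z'⁆ := by
    intro z z'
    have h := P.bracket_eq (P.e.symm z) (P.e.symm z')
    rw [P.e.apply_symm_apply, P.e.apply_symm_apply] at h
    rw [IsProductByGenerators.p₁, h]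
    simp [IsProductByGenerators.p₁]
  have hp2 : ∀ z z' : L, P.p₂ ⁅z, z'⁆ = ⁅P.p₂ z, P.p₂ z'⁆ := by
    intro z z'
    have h := P.bracket_eq (P.e.symm z) (P.e.symm z')
    rw [P.e.apply_symm_apply, P.e.apply_symm_apply] at h
    rw [IsProductByGenerators.p₂, h]
    simp [IsProductByGenerators.p₂]
  have hcent : ∀ (v : Fin P.n1 → Fin P.n2 → ℂ) (z : L), ⁅P.e (0, 0, v), z⁆ = 0 := by
    intro v z
    have h := P.bracket_eq (0, 0, v) (P.e.symm z)
    rw [P.e.apply_symm_apply] at h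
    rw [h]
    have : ((0 : g1 × g2 × (Fin P.n1 → Fin P.n2 → ℂ)) = (0, 0, 0)) := rfl
    simp [← this]
  -- c := ⁅ι₂ y, ι₁ a⁆ is of the form e (0,0,v)
  have hform : ∀ (y : g2) (a : g1), ∃ v, ⁅P.ι₂ y, P.ι₁ a⁆ = P.e (0, 0, v) := by
    intro y a
    refine ⟨0 - P.Φ a y, ?_⟩
    have h := P.bracket_eq (0, y, 0) (a, 0, 0)
    simpa [IsProductByGenerators.ι₁, IsProductByGenerators.ι₂] using h
  have hform' : ∀ (x : g1) (b : g2), ∃ v, ⁅P.ι₁ x, P.ι₂ b⁆ = P.e (0, 0, v) := by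
    intro x b
    refine ⟨P.Φ x b - 0, ?_⟩
    have h := P.bracket_eq (x, 0, 0) (0, b, 0)
    simpa [IsProductByGenerators.ι₁, IsProductByGenerators.ι₂] using h
  -- if c is central then D c brackets to zero with everything
  have hDc : ∀ c : L, (∀ z : L, ⁅c, z⁆ = 0) → ∀ z : L, ⁅D c, z⁆ = 0 := by
    intro c hc z
    have h := hD c z
    rw [hc z] at h
    have h2 : ⁅c, D z⁆ = 0 := hc _
    rw [h2, add_zero, map_zero] at h
    exact h.symm
  have hp1ι1 : ∀ a : g1, P.p₁ (P.ι₁ a) = a := by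
    intro a; simp [IsProductByGenerators.p₁, IsProductByGenerators.ι₁]
  have hp1ι2 : ∀ b : g2, P.p₁ (P.ι₂ b) = 0 := by
    intro b; simp [IsProductByGenerators.p₁, IsProductByGenerators.ι₂]
  have hp2ι2 : ∀ b : g2, P.p₂ (P.ι₂ b) = b := by
    intro b; simp [IsProductByGenerators.p₂, IsProductByGenerators.ι₂]
  have hp2ι1 : ∀ a : g1, P.p₂ (P.ι₁ a) = 0 := by
    intro a; simp [IsProductByGenerators.p₂, IsProductByGenerators.ι₁]
  have hp1add : ∀ u u' : L, P.p₁ (u + u') = P.p₁ u + P.p₁ u' := by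
    intro u u'; simp [IsProductByGenerators.p₁]
  have hp2add : ∀ u u' : L, P.p₂ (u + u') = P.p₂ u + P.p₂ u' := by
    intro u u'; simp [IsProductByGenerators.p₂]
  have hp1zero : P.p₁ (0 : L) = 0 := by simp [IsProductByGenerators.p₁]
  have hp2zero : P.p₂ (0 : L) = 0 := by simp [IsProductByGenerators.p₂]
  constructor
  · intro y a
    obtain ⟨v, hv⟩ := hform y a
    have hccent : ∀ z : L, ⁅(⁅P.ι₂ y, P.ι₁ a⁆ : L), z⁆ = 0 := by
      intro z; rw [hv]; exact hcent v z
    have hDz : ∀ z : L, ⁅D ⁅P.ι₂ y, P.ι₁ a⁆, z⁆ = 0 := hDc _ hccent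
    have key : ⁅P.D12 D y, a⁆ = P.p₁ (D ⁅P.ι₂ y, P.ι₁ a⁆) := by
      rw [hD (P.ι₂ y) (P.ι₁ a), hp1add, hp1 _ _, hp1 _ _, hp1ι1, hp1ι2, zero_lie, add_zero]
      rfl
    rw [LieAlgebra.center, LieModule.mem_maxTrivSubmodule]
    intro b
    rw [← lie_skew, key, ← hp1ι1 b, ← hp1 _ _, hDz (P.ι₁ b), hp1zero]; simp
  · intro x b
    obtain ⟨v, hv⟩ := hform' x b
    have hccent : ∀ z : L, ⁅(⁅P.ι₁ x, P.ι₂ b⁆ : L), z⁆ = 0 := by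
      intro z; rw [hv]; exact hcent v z
    have hDz : ∀ z : L, ⁅D ⁅P.ι₁ x, P.ι₂ b⁆, z⁆ = 0 := hDc _ hccent
    have key : ⁅P.D21 D x, b⁆ = P.p₂ (D ⁅P.ι₁ x, P.ι₂ b⁆) := by
      rw [hD (P.ι₁ x) (P.ι₂ b), hp2add, hp2 _ _, hp2 _ _, hp2ι2, hp2ι1, zero_lie, add_zero]
      rfl
    rw [LieAlgebra.center, LieModule.mem_maxTrivSubmodule]
    intro c
    rw [← lie_skew, key, ← hp2ι2 c, ← hp2 _ _, hDz (P.ι₂ c), hp2zero]; simp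
end
end
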